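/- arXiv:1703.01738 — 8 statements merged into one kernel-verified Lean document; each statement's English description precedes it below -/
import Mathlib

section
/- Let φ₁ > 0 and let f : [φ₁,∞) → ℝ be continuous with f(φ) > 0 for all φ ≥ φ₁ and lim_{φ→∞} f(φ) = 0. Suppose there exist constants a̅ > 0 and α ∈ (0,1) such that 0 < f(φ) - f(φ+2π) ≤ a̅ φ^{-α-1} for all φ ≥ φ₁. Then there exists a constant m̅ > 0 such that f(φ) ≤ m̅ φ^{-α} for all φ ≥ φ₁. -/
open Set Filter Real

lemma mvt_step' (α : ℝ) (hα0 : 0 < α) {u : ℝ} (hu : 0 < u) :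
    2 * π * α * (u + 2 * π) ^ (-α - 1) ≤ u ^ (-α) - (u + 2 * π) ^ (-α) := by
  have hπ : 0 < π := Real.pi_pos
  have huv : u < u + 2 * π := by linarith
  have hv : 0 < u + 2 * π := by linarith
  obtain ⟨c, hc, hderiv⟩ := exists_hasDerivAt_eq_slope (fun x => x ^ (-α))
    (fun x => (-α) * x ^ (-α - 1)) huv
    (by
      apply ContinuousOn.rpow_const continuousOn_id
      intro x hx
      exact Or.inl (by have := hx.1; intro h; simp only [id_eq] at h; rw [h] at this; linarith))
    (fun x hx => Real.hasDerivAt_rpow_const (Or.inl (by have := hx.1; intro h; rw [h] at this; linarith)))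
  have hc0 : 0 < c := lt_trans hu hc.1
  have hmono : (u + 2 * π) ^ (-α - 1) ≤ c ^ (-α - 1) :=
    Real.rpow_le_rpow_of_nonpos hc0 (le_of_lt hc.2) (by linarith)
  have heq : u ^ (-α) - (u + 2 * π) ^ (-α) = α * c ^ (-α - 1) * (2 * π) := by
    have h2 : (u + 2 * π) - u ≠ 0 := by linarith
    field_simp at hderiv
    nlinarith [hderiv]
  rw [heq]
  nlinarith [mul_le_mul_of_nonneg_left hmono (by positivity : (0:ℝ) ≤ 2 * π * α)]

theorem stmt_0 (φ₁ : ℝ) (hφ₁ : 0 < φ₁) (f : ℝ → ℝ)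
    (hf : ContinuousOn f (Ici φ₁))
    (hpos : ∀ φ ≥ φ₁, 0 < f φ)
    (hlim : Tendsto f atTop (nhds 0))
    (a α : ℝ) (ha : 0 < a) (hα : α ∈ Ioo (0:ℝ) 1)
    (hdec : ∀ φ ≥ φ₁, 0 < f φ - f (φ + 2 * π) ∧ f φ - f (φ + 2 * π) ≤ a * φ ^ (-α - 1)) :
    ∃ m > 0, ∀ φ ≥ φ₁, f φ ≤ m * φ ^ (-α) := by
  have hπ : 0 < π := Real.pi_pos
  obtain ⟨hα0, hα1⟩ := hα
  refine ⟨a / φ₁ + a / (2 * π * α), by positivity, fun φ hφ => ?_⟩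
  have hφ0 : 0 < φ := lt_of_lt_of_le hφ₁ hφ
  have key : ∀ N : ℕ, f φ - f (φ + 2 * π * (N + 1)) ≤
      a * φ ^ (-α - 1) + a / (2 * π * α) * (φ ^ (-α) - (φ + 2 * π * N) ^ (-α)) := by
    intro N
    induction N with
    | zero =>
      have h := (hdec φ hφ).2
      simp only [Nat.cast_zero, zero_add, mul_zero, add_zero, mul_one, sub_self, mul_zero]
      linarith
    | succ N ih =>
      have hφN : φ₁ ≤ φ + 2 * π * (N + 1) := by
        have h1 : (0:ℝ) ≤ 2 * π * (N + 1) := by positivity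
        linarith
      have hd := (hdec _ hφN).2
      have hu : 0 < φ + 2 * π * N := by positivity
      have hmvt := mvt_step' α hα0 hu
      have heq2 : φ + 2 * π * (N:ℝ) + 2 * π = φ + 2 * π * ((N:ℝ) + 1) := by ring
      rw [heq2] at hmvt
      have hvb : (0:ℝ) < φ + 2 * π * ((N:ℝ) + 1) := by positivity
      have hstep : a * (φ + 2 * π * ((N:ℝ) + 1)) ^ (-α - 1) ≤
          a / (2 * π * α) * ((φ + 2 * π * (N:ℝ)) ^ (-α) - (φ + 2 * π * ((N:ℝ) + 1)) ^ (-α)) := by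
        rw [div_mul_eq_mul_div, le_div_iff₀ (by positivity)]
        nlinarith [Real.rpow_pos_of_pos hvb (-α - 1)]
      have hsplit : f φ - f (φ + 2 * π * ((N:ℝ) + 1 + 1)) =
          (f φ - f (φ + 2 * π * ((N:ℝ) + 1))) +
          (f (φ + 2 * π * ((N:ℝ) + 1)) - f (φ + 2 * π * ((N:ℝ) + 1) + 2 * π)) := by
        have : φ + 2 * π * ((N:ℝ) + 1) + 2 * π = φ + 2 * π * ((N:ℝ) + 1 + 1) := by ring
        rw [this]; ring
      push_cast
      rw [hsplit]
      push_cast at hd ⊢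
      linarith
  have hbound : ∀ N : ℕ, f φ - f (φ + 2 * π * (N + 1)) ≤
      a * φ ^ (-α - 1) + a / (2 * π * α) * φ ^ (-α) := by
    intro N
    have h := key N
    have hp : (0:ℝ) ≤ (φ + 2 * π * N) ^ (-α) :=
      (Real.rpow_pos_of_pos (by positivity) _).le
    have hc : (0:ℝ) ≤ a / (2 * π * α) := by positivity
    nlinarith
  -- take the limit N → ∞
  have h1 : Tendsto (fun N : ℕ => (N:ℝ)) atTop atTop := tendsto_natCast_atTop_atTop
  have h2 : Tendsto (fun N : ℕ => (N:ℝ) + 1) atTop atTop :=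
    tendsto_atTop_add_const_right atTop 1 h1
  have h3 : Tendsto (fun N : ℕ => 2 * π * ((N:ℝ) + 1)) atTop atTop :=
    h2.const_mul_atTop (by positivity)
  have htop : Tendsto (fun N : ℕ => φ + 2 * π * ((N:ℝ) + 1)) atTop atTop :=
    tendsto_atTop_add_const_left atTop φ h3
  have htend : Tendsto (fun N : ℕ => f (φ + 2 * π * ((N:ℝ) + 1))) atTop (nhds 0) :=
    hlim.comp htop
  have hdiff : Tendsto (fun N : ℕ => f φ - f (φ + 2 * π * ((N:ℝ) + 1))) atTop (nhds (f φ - 0)) :=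
    tendsto_const_nhds.sub htend
  have hfinal : f φ - 0 ≤ a * φ ^ (-α - 1) + a / (2 * π * α) * φ ^ (-α) :=
    le_of_tendsto hdiff (Filter.Eventually.of_forall hbound)
  have hsplitpow : φ ^ (-α - 1) = φ ^ (-α) * φ⁻¹ := by
    rw [← Real.rpow_neg_one φ, ← Real.rpow_add hφ0]
    ring_nf
  have hinv : φ⁻¹ ≤ φ₁⁻¹ := by
    apply inv_anti₀ hφ₁ hφ
  have hpowpos : (0:ℝ) < φ ^ (-α) := Real.rpow_pos_of_pos hφ0 _
  have : a * φ ^ (-α - 1) ≤ a / φ₁ * φ ^ (-α) := by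
    rw [hsplitpow, div_mul_eq_mul_div, le_div_iff₀ hφ₁]
    have h5 : φ⁻¹ * φ₁ ≤ 1 := by
      rw [← div_eq_inv_mul]
      exact div_le_one_of_le₀ hφ hφ0.le
    nlinarith [mul_le_mul_of_nonneg_left h5 (mul_pos ha hpowpos).le]
  nlinarith [hfinal]
end

section
/- Under the assumptions of the spiral criterion (f continuous on [φ₁,∞) with φ₁ > 0, f(φ) → 0, m̲ φ^{-α} ≤ f(φ) ≤ m̅ φ^{-α}, and 0 < f(φ) - f(φ+2π) ≤ a̅ φ^{-α-1} for all φ ≥ φ₁, with α ∈ (0,1) and positive constants m̲, m̅, a̅), for every sufficiently small ε ∈ (0,1), the two-dimensional Lebesgue measure of the ε-neighborhood N(Γ,ε) of the tail Γ(φ₂(ε),∞) with φ₂(ε) = (2a̅/ε)^{1/(α+1)} satisfies π m̲² [(2a̅)^{1/(α+1)} + 2π]^{-2α} ε^{2α/(α+1)} ≤ |N(Γ,ε)| ≤ π [m̅ (2a̅)^{-α/(α+1)} + 1]² ε^{2α/(α+1)}. -/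
open Set Filter Real Metric MeasureTheory

lemma seq_close (g : ℕ → ℝ) (ε r : ℝ) (hε : 0 < ε) (hr : 0 ≤ r) (hr0 : r ≤ g 0)
    (hstep : ∀ n, g n - g (n+1) ≤ ε) (htend : Tendsto g atTop (nhds 0)) :
    ∃ n, |g n - r| ≤ ε := by
  classical
  rcases eq_or_lt_of_le hr with h0 | h0
  · obtain ⟨N, hN⟩ := (Metric.tendsto_atTop.mp htend) ε hε
    refine ⟨N, ?_⟩
    have := hN N le_rfl
    rw [Real.dist_eq, sub_zero] at this
    rw [← h0, sub_zero]
    exact this.le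
  · have hev : ∃ n, g n < r := (htend.eventually (eventually_lt_nhds h0)).exists
    set N := Nat.find hev with hN
    have hNs : g N < r := Nat.find_spec hev
    have hN0 : N ≠ 0 := by
      intro h
      rw [h] at hNs
      linarith
    obtain ⟨M, hM⟩ : ∃ M, N = M + 1 :=
      ⟨N - 1, (Nat.succ_pred_eq_of_pos (Nat.pos_of_ne_zero hN0)).symm⟩
    have hMlt : ¬ g M < r := Nat.find_min hev (by omega)
    refine ⟨M, ?_⟩
    have h1 : r ≤ g M := not_lt.mp hMlt
    have h2 : g M - g (M+1) ≤ ε := hstep M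
    rw [hM] at hNs
    rw [abs_le]
    constructor <;> linarith

lemma euclid_norm_two (x : EuclideanSpace ℝ (Fin 2)) : ‖x‖ = √((x 0)^2 + (x 1)^2) := by
  rw [EuclideanSpace.norm_eq, Fin.sum_univ_two]
  simp [sq_abs]

lemma euclid_dist_two (x y : EuclideanSpace ℝ (Fin 2)) :
    dist x y = √((x 0 - y 0)^2 + (x 1 - y 1)^2) := by
  rw [EuclideanSpace.dist_eq, Fin.sum_univ_two]
  simp [Real.dist_eq, sq_abs]

lemma vol_ball2 (x : EuclideanSpace ℝ (Fin 2)) (ρ : ℝ) (hρ : 0 ≤ ρ) :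
    volume (Metric.closedBall x ρ) = ENNReal.ofReal (π * ρ^2) := by
  rw [EuclideanSpace.volume_closedBall, Fintype.card_fin]
  rw [show ((2:ℕ):ℝ)/2 + 1 = 2 by norm_num]
  rw [Real.Gamma_two, div_one, Real.sq_sqrt Real.pi_nonneg]
  rw [← ENNReal.ofReal_pow hρ, ← ENNReal.ofReal_mul (by positivity)]
  rw [mul_comm]

set_option maxHeartbeats 1000000 in
theorem stmt_2 (φ₁ : ℝ) (hφ₁ : 0 < φ₁) (f : ℝ → ℝ)
    (hf : ContinuousOn f (Ici φ₁))
    (hlim : Tendsto f atTop (nhds 0))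
    (m₁ m₂ a α : ℝ) (hm₁ : 0 < m₁) (hm₂ : 0 < m₂) (ha : 0 < a) (hα : α ∈ Ioo (0:ℝ) 1)
    (hlow : ∀ φ ≥ φ₁, m₁ * φ ^ (-α) ≤ f φ)
    (hup : ∀ φ ≥ φ₁, f φ ≤ m₂ * φ ^ (-α))
    (hdec : ∀ φ ≥ φ₁, 0 < f φ - f (φ + 2 * π) ∧ f φ - f (φ + 2 * π) ≤ a * φ ^ (-α - 1)) :
    ∀ᶠ ε in nhdsWithin (0:ℝ) (Ioi 0), ε < 1 →
      (ENNReal.ofReal (π * m₁ ^ 2 * ((2 * a) ^ (1 / (α + 1)) + 2 * π) ^ (-(2 * α)) *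
            ε ^ (2 * α / (α + 1))) ≤
          volume (cthickening ε {p : EuclideanSpace ℝ (Fin 2) |
            ∃ φ ≥ (2 * a / ε) ^ (1 / (α + 1)), p = ![f φ * Real.cos φ, f φ * Real.sin φ]}) ∧
        volume (cthickening ε {p : EuclideanSpace ℝ (Fin 2) |
            ∃ φ ≥ (2 * a / ε) ^ (1 / (α + 1)), p = ![f φ * Real.cos φ, f φ * Real.sin φ]}) ≤
          ENNReal.ofReal (π * (m₂ * (2 * a) ^ (-(α / (α + 1))) + 1) ^ 2 *
            ε ^ (2 * α / (α + 1)))) := by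
  obtain ⟨hα0, hα1⟩ := hα
  have hπ := Real.pi_pos
  have hα1' : (0:ℝ) < α + 1 := by linarith
  have h2a : (0:ℝ) < 2*a := by linarith
  set M := max φ₁ 1 with hMdef
  have hM1 : (1:ℝ) ≤ M := le_max_right _ _
  have hMφ : φ₁ ≤ M := le_max_left _ _
  have hMpos : (0:ℝ) < M := lt_of_lt_of_le one_pos hM1
  have hδpos : 0 < 2*a / M ^ (α+1) := by positivity
  filter_upwards [Ioo_mem_nhdsGT hδpos] with ε hε hε1
  obtain ⟨hε0, hεδ⟩ := hε
  have h2aε : (0:ℝ) < 2*a/ε := by positivity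
  set φ₂ := (2 * a / ε) ^ (1/(α+1)) with hφ₂def
  have hφ₂pos : 0 < φ₂ := Real.rpow_pos_of_pos h2aε _
  -- φ₂ ≥ M
  have hφ₂M : M ≤ φ₂ := by
    have h1 : M ^ (α+1) ≤ 2*a/ε := by
      rw [le_div_iff₀ hε0]
      have h2 := (lt_div_iff₀ (Real.rpow_pos_of_pos hMpos (α+1))).mp hεδ
      linarith
    calc M = (M ^ (α+1)) ^ (1/(α+1)) := by
          rw [← Real.rpow_mul hMpos.le, mul_one_div, div_self (ne_of_gt hα1'), Real.rpow_one]
      _ ≤ φ₂ := Real.rpow_le_rpow (by positivity) h1 (by positivity)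
  have hφ₂1 : 1 ≤ φ₂ := le_trans hM1 hφ₂M
  have hφ₂φ₁ : φ₁ ≤ φ₂ := le_trans hMφ hφ₂M
  have hne : α + 1 ≠ 0 := ne_of_gt hα1'
  -- a * φ₂ ^ (-α-1) = ε/2
  have hhalf : a * φ₂ ^ (-α-1) = ε/2 := by
    have h1 : φ₂ ^ (-α-1) = (2*a/ε) ^ (-(1:ℝ)) := by
      rw [hφ₂def, ← Real.rpow_mul h2aε.le]
      congr 1
      field_simp
      ring
    rw [h1, Real.rpow_neg_one]
    field_simp
  have hstepg : ∀ φ, φ₂ ≤ φ → a * φ ^ (-α-1) ≤ ε/2 := by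
    intro φ hφ
    rw [← hhalf]
    exact mul_le_mul_of_nonneg_left
      (Real.rpow_le_rpow_of_nonpos hφ₂pos hφ (by linarith)) ha.le
  -- abbreviations
  set E := ε ^ (α/(α+1)) with hEdef
  have hEpos : 0 < E := Real.rpow_pos_of_pos hε0 _
  have hεE : ε ≤ E := by
    have h := Real.rpow_le_rpow_of_exponent_ge hε0 hε1.le
      (show α/(α+1) ≤ 1 by rw [div_le_one hα1']; linarith)
    rwa [Real.rpow_one] at h
  have hE2 : ε ^ (2*α/(α+1)) = E^2 := by
    rw [hEdef, ← Real.rpow_natCast (ε ^ (α/(α+1))) 2, ← Real.rpow_mul hε0.le]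
    congr 1
    push_cast
    ring
  constructor
  · -- LOWER BOUND
    set C := (2*a) ^ (1/(α+1)) + 2*π with hCdef
    have hCpos : 0 < C := by positivity
    set D := ε ^ (-(1/(α+1))) with hDdef
    have hDpos : 0 < D := Real.rpow_pos_of_pos hε0 _
    have hD1 : 1 ≤ D := Real.one_le_rpow_of_pos_of_le_one_of_nonpos hε0 hε1.le (neg_nonpos.mpr (by positivity))
    set ρ := m₁ * (φ₂ + 2*π) ^ (-α) with hρdef
    have hφ₂2πpos : 0 < φ₂ + 2*π := by positivity
    have hρpos : 0 < ρ := by positivity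
    -- ball ⊆ cthickening
    have hball : closedBall (0 : EuclideanSpace ℝ (Fin 2)) ρ ⊆ cthickening ε
        {p : EuclideanSpace ℝ (Fin 2) |
          ∃ φ ≥ φ₂, p = ![f φ * Real.cos φ, f φ * Real.sin φ]} := by
      intro p hp
      have hpn : ‖p‖ ≤ ρ := mem_closedBall_zero_iff.mp hp
      set r := ‖p‖ with hrdef
      have hr0 : (0:ℝ) ≤ r := norm_nonneg p
      set z : ℂ := ⟨p 0, p 1⟩ with hzdef
      have hzabs : ‖z‖ = r := by
        rw [hrdef, euclid_norm_two, Complex.norm_def, Complex.normSq_mk]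
        congr 1
        ring
      set θ := Complex.arg z with hθdef
      have h0 : p 0 = r * Real.cos θ := by
        rw [← hzabs]
        exact (Complex.norm_mul_cos_arg z).symm
      have h1 : p 1 = r * Real.sin θ := by
        rw [← hzabs]
        exact (Complex.norm_mul_sin_arg z).symm
      set k : ℤ := ⌈(φ₂ - θ)/(2*π)⌉ with hkdef
      set φ₀ := θ + 2*π*k with hφ₀def
      have hk1 : φ₂ ≤ φ₀ := by
        have h := Int.le_ceil ((φ₂ - θ)/(2*π))
        rw [div_le_iff₀ Real.two_pi_pos] at h
        rw [hφ₀def]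
        linarith
      have hk2 : φ₀ < φ₂ + 2*π := by
        have h := Int.ceil_lt_add_one ((φ₂ - θ)/(2*π))
        have h2 : ((k:ℝ) - 1) < (φ₂-θ)/(2*π) := by
          rw [hkdef]
          push_cast
          linarith
        have h3 := (lt_div_iff₀ Real.two_pi_pos).mp h2
        rw [hφ₀def]
        linarith
      have hφ₀pos : 0 < φ₀ := lt_of_lt_of_le hφ₂pos hk1
      have hφ₀φ₁ : φ₁ ≤ φ₀ := le_trans hφ₂φ₁ hk1
      have hang : ∀ n : ℕ, Real.cos (φ₀ + 2*π*n) = Real.cos θ ∧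
          Real.sin (φ₀ + 2*π*n) = Real.sin θ := by
        intro n
        have he : φ₀ + 2*π*n = θ + ((k + n : ℤ)) * (2*π) := by
          rw [hφ₀def]
          push_cast
          ring
        rw [he, Real.cos_add_int_mul_two_pi, Real.sin_add_int_mul_two_pi]
        exact ⟨rfl, rfl⟩
      have hφn : ∀ n : ℕ, φ₂ ≤ φ₀ + 2*π*n := fun n =>
        le_trans hk1 (le_add_of_nonneg_right (by positivity))
      have hφnφ₁ : ∀ n : ℕ, φ₁ ≤ φ₀ + 2*π*n := fun n => le_trans hφ₂φ₁ (hφn n)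
      set g : ℕ → ℝ := fun n => f (φ₀ + 2*π*n) with hgdef
      have hgr : r ≤ g 0 := by
        have e0 : φ₀ + 2*π*(0:ℕ) = φ₀ := by push_cast; ring
        rw [hgdef]
        simp only [e0]
        calc r ≤ ρ := hpn
          _ ≤ m₁ * φ₀ ^ (-α) := by
              rw [hρdef]
              exact mul_le_mul_of_nonneg_left
                (Real.rpow_le_rpow_of_nonpos hφ₀pos hk2.le (by linarith)) hm₁.le
          _ ≤ f φ₀ := hlow φ₀ hφ₀φ₁
      have hstep : ∀ n, g n - g (n+1) ≤ ε := by
        intro n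
        have he : φ₀ + 2*π*((n:ℕ)+1 : ℕ) = (φ₀ + 2*π*n) + 2*π := by push_cast; ring
        rw [hgdef]
        simp only [he]
        calc f (φ₀ + 2*π*n) - f ((φ₀ + 2*π*n) + 2*π) ≤ a * (φ₀ + 2*π*n) ^ (-α-1) :=
              (hdec _ (hφnφ₁ n)).2
          _ ≤ ε/2 := hstepg _ (hφn n)
          _ ≤ ε := by linarith
      have htend : Tendsto g atTop (nhds 0) := by
        apply hlim.comp
        exact tendsto_atTop_add_const_left _ φ₀
          (Tendsto.const_mul_atTop Real.two_pi_pos tendsto_natCast_atTop_atTop)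
      obtain ⟨n, hn⟩ := seq_close g ε r hε0 hr0 hgr hstep htend
      refine mem_cthickening_of_dist_le p
        (WithLp.toLp 2 ![f (φ₀ + 2*π*n) * Real.cos (φ₀ + 2*π*n), f (φ₀ + 2*π*n) * Real.sin (φ₀ + 2*π*n)]) ε _
        ⟨φ₀ + 2*π*n, hφn n, rfl⟩ ?_
      have hd : dist p (WithLp.toLp 2 ![f (φ₀ + 2*π*n) * Real.cos (φ₀ + 2*π*n),
          f (φ₀ + 2*π*n) * Real.sin (φ₀ + 2*π*n)] : EuclideanSpace ℝ (Fin 2))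
          = |r - f (φ₀ + 2*π*n)| := by
        rw [euclid_dist_two]
        simp only [PiLp.toLp_apply, Matrix.cons_val_zero, Matrix.cons_val_one, Matrix.head_cons,
          h0, h1, (hang n).1, (hang n).2]
        rw [show (r*Real.cos θ - f (φ₀ + 2*π*n)*Real.cos θ)^2 +
            (r*Real.sin θ - f (φ₀ + 2*π*n)*Real.sin θ)^2 = (r - f (φ₀ + 2*π*n))^2 by
          linear_combination (r - f (φ₀ + 2*π*n))^2 * Real.sin_sq_add_cos_sq θ]
        exact Real.sqrt_sq_eq_abs _
      rw [hd, abs_sub_comm]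
      exact hn
    -- volume comparison
    have hvol := measure_mono (μ := volume) hball
    rw [vol_ball2 _ ρ hρpos.le] at hvol
    refine le_trans ?_ hvol
    apply ENNReal.ofReal_le_ofReal
    -- real inequality
    have hφ₂eq : φ₂ = (2*a) ^ (1/(α+1)) * D := by
      rw [hφ₂def, hDdef, Real.div_rpow h2a.le hε0.le, div_eq_mul_inv, ← Real.rpow_neg hε0.le]
    have h2ac : (0:ℝ) < (2*a) ^ (1/(α+1)) := by positivity
    have hCb : φ₂ + 2*π ≤ C * D := by
      rw [hφ₂eq, hCdef]
      have h4 : 2*π*1 ≤ 2*π*D := by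
        have := Real.two_pi_pos
        exact mul_le_mul_of_nonneg_left hD1 (by linarith)
      linarith [h4]
    have hmono : (C * D) ^ (-α) ≤ (φ₂ + 2*π) ^ (-α) :=
      Real.rpow_le_rpow_of_nonpos hφ₂2πpos hCb (by linarith)
    have hCD : (C * D) ^ (-α) = C ^ (-α) * E := by
      rw [Real.mul_rpow hCpos.le hDpos.le, hDdef, ← Real.rpow_mul hε0.le, hEdef]
      congr 1
      field_simp
    have hC2 : C ^ (-(2*α)) = (C ^ (-α))^2 := by
      rw [← Real.rpow_natCast (C ^ (-α)) 2, ← Real.rpow_mul hCpos.le]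
      congr 1
      push_cast
      ring
    have hLρ : m₁ * (C ^ (-α) * E) ≤ ρ := by
      rw [hρdef]
      apply mul_le_mul_of_nonneg_left _ hm₁.le
      rw [← hCD]
      exact hmono
    have hCα : 0 < C ^ (-α) := Real.rpow_pos_of_pos hCpos _
    calc π * m₁ ^ 2 * C ^ (-(2*α)) * ε ^ (2*α/(α+1))
        = π * (m₁ * (C ^ (-α) * E))^2 := by rw [hC2, hE2]; ring
      _ ≤ π * ρ^2 := by
          apply mul_le_mul_of_nonneg_left _ hπ.le
          exact pow_le_pow_left₀ (by positivity) hLρ 2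
  · -- UPPER BOUND
    have hR₀ : (0:ℝ) ≤ m₂ * φ₂ ^ (-α) := by positivity
    have hSsub : {p : EuclideanSpace ℝ (Fin 2) |
        ∃ φ ≥ φ₂, p = ![f φ * Real.cos φ, f φ * Real.sin φ]} ⊆
        closedBall 0 (m₂ * φ₂ ^ (-α)) := by
      rintro q ⟨φ, hφ, hq⟩
      have hφ1 : φ₁ ≤ φ := hφ₂φ₁.trans hφ
      have hφpos : 0 < φ := lt_of_lt_of_le hφ₂pos hφ
      have hfpos : 0 < f φ := lt_of_lt_of_le (by positivity) (hlow φ hφ1)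
      rw [mem_closedBall_zero_iff, euclid_norm_two, hq]
      simp only [Matrix.cons_val_zero, Matrix.cons_val_one, Matrix.head_cons]
      rw [show (f φ*Real.cos φ)^2 + (f φ*Real.sin φ)^2 = (f φ)^2 by
        linear_combination (f φ)^2 * Real.sin_sq_add_cos_sq φ]
      rw [Real.sqrt_sq hfpos.le]
      calc f φ ≤ m₂ * φ ^ (-α) := hup φ hφ1
        _ ≤ m₂ * φ₂ ^ (-α) := mul_le_mul_of_nonneg_left
            (Real.rpow_le_rpow_of_nonpos hφ₂pos hφ (by linarith)) hm₂.le
    have hsub2 : cthickening ε {p : EuclideanSpace ℝ (Fin 2) |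
        ∃ φ ≥ φ₂, p = ![f φ * Real.cos φ, f φ * Real.sin φ]} ⊆
        closedBall 0 (m₂ * φ₂ ^ (-α) + ε) := by
      refine (cthickening_subset_of_subset ε hSsub).trans ?_
      rw [cthickening_closedBall hε0.le hR₀]
      exact closedBall_subset_closedBall (by linarith)
    have hvol := measure_mono (μ := volume) hsub2
    rw [vol_ball2 _ _ (by positivity)] at hvol
    refine le_trans hvol (ENNReal.ofReal_le_ofReal ?_)
    -- real inequality
    have hφ₂α : φ₂ ^ (-α) = (2*a) ^ (-(α/(α+1))) * E := by
      rw [hφ₂def, ← Real.rpow_mul h2aε.le,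
        show (1/(α+1)) * (-α) = -(α/(α+1)) by ring,
        Real.div_rpow h2a.le hε0.le, Real.rpow_neg hε0.le, div_eq_mul_inv, inv_inv, hEdef]
    have hKE : m₂ * φ₂ ^ (-α) + ε ≤ (m₂ * (2*a) ^ (-(α/(α+1))) + 1) * E := by
      rw [hφ₂α]
      have h4 : m₂ * ((2*a) ^ (-(α/(α+1))) * E) = m₂ * (2*a) ^ (-(α/(α+1))) * E := by ring
      linarith [h4, hεE]
    have hRpos : (0:ℝ) ≤ m₂ * φ₂ ^ (-α) + ε := by positivity
    calc π * (m₂ * φ₂ ^ (-α) + ε)^2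
        ≤ π * ((m₂ * (2*a) ^ (-(α/(α+1))) + 1) * E)^2 := by
          apply mul_le_mul_of_nonneg_left _ hπ.le
          exact pow_le_pow_left₀ hRpos hKE 2
      _ = π * (m₂ * (2*a) ^ (-(α/(α+1))) + 1)^2 * ε ^ (2*α/(α+1)) := by
          rw [hE2]; ring
end

section
/- Let G be a curve in ℝ² with finite diameter diam(G) = sup_{z,w ∈ G} dist(z,w). Then for every ε > 0, the two-dimensional Lebesgue measure of the closed ε-neighborhood satisfies |G_ε| ≥ 2ε · diam(G) + π ε². -/
set_option maxHeartbeats 1000000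
open Set Filter Real Metric MeasureTheory EMetric

noncomputable abbrev E2 := EuclideanSpace ℝ (Fin 2)
noncomputable abbrev Feq : E2 ≃ᵐ ℝ × ℝ :=
  (MeasurableEquiv.toLp 2 (Fin 2 → ℝ)).symm.trans (MeasurableEquiv.piFinTwo fun _ => ℝ)

lemma Feq_mp : MeasurePreserving Feq volume volume :=
  (EuclideanSpace.volume_preserving_symm_measurableEquiv_toLp (Fin 2)).trans
    (volume_preserving_piFinTwo fun _ => ℝ)

lemma Feq_symm_dist (x y : ℝ) (p : E2) :
    dist (Feq.symm (x, y)) p = Real.sqrt ((x - p 0)^2 + (y - p 1)^2) := by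
  have h0 : (Feq.symm (x, y)) 0 = x := rfl
  have h1 : (Feq.symm (x, y)) 1 = y := rfl
  rw [EuclideanSpace.dist_eq]
  simp [Fin.sum_univ_two, h0, h1, Real.dist_eq, sq_abs]

lemma sqrt_int {ε : ℝ} (hε : 0 < ε) :
    ∫ x in (-ε)..ε, 2 * Real.sqrt (ε^2 - x^2) = π * ε^2 := by
  have h1 : ∀ x : ℝ, 2 * Real.sqrt (ε^2 - x^2) = 2 * ε * Real.sqrt (1 - (ε⁻¹ * x)^2) := by
    intro x
    have : ε^2 - x^2 = ε^2 * (1 - (ε⁻¹*x)^2) := by field_simp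
    rw [this, Real.sqrt_mul (sq_nonneg ε), Real.sqrt_sq hε.le]; ring
  simp_rw [h1]
  rw [intervalIntegral.integral_const_mul]
  have h2 : ∫ x in (-ε)..ε, Real.sqrt (1 - (ε⁻¹ * x)^2) =
      (ε⁻¹)⁻¹ • ∫ x in (ε⁻¹ * (-ε))..(ε⁻¹ * ε), Real.sqrt (1 - x^2) :=
    intervalIntegral.integral_comp_mul_left (fun y => Real.sqrt (1 - y^2)) (inv_ne_zero hε.ne')
  rw [h2, inv_mul_cancel₀ hε.ne', mul_neg, inv_mul_cancel₀ hε.ne', integral_sqrt_one_sub_sq]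
  simp [smul_eq_mul]; ring

lemma key {d ε : ℝ} (hd : 0 ≤ d) (hε : 0 < ε) (S : Set E2) (hS : IsPreconnected S)
    (h0 : (0 : E2) ∈ S) (hv : (d • EuclideanSpace.single (0 : Fin 2) (1:ℝ)) ∈ S) :
    ENNReal.ofReal (2 * ε * d + π * ε ^ 2) ≤ volume (cthickening ε S) := by
  set v : E2 := d • EuclideanSpace.single (0 : Fin 2) (1:ℝ) with hvdef
  have hv0 : v 0 = d := by simp [hvdef, EuclideanSpace.single_apply]
  have hv1 : v 1 = 0 := by simp [hvdef, EuclideanSpace.single_apply]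
  set T := cthickening ε S with hTdef
  have hTm : MeasurableSet T := isClosed_cthickening.measurableSet
  set Tp : Set (ℝ × ℝ) := Feq.symm ⁻¹' T with hTpdef
  have hTpm : MeasurableSet Tp := Feq.symm.measurable hTm
  have hvolT : volume Tp = volume T := (Feq_mp.symm Feq).measure_preimage hTm.nullMeasurableSet
  -- slices
  set slice : ℝ → Set ℝ := fun x => {y | Feq.symm (x, y) ∈ T} with hslice
  have hsl : ∀ x, Prod.mk x ⁻¹' Tp = slice x := fun x => rfl
  have hfub : volume Tp = ∫⁻ x, volume (slice x) := by
    rw [Measure.volume_eq_prod, Measure.prod_apply hTpm]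
    simp_rw [hsl]
  -- generic slice bound
  have hball : ∀ (x : ℝ) (p : E2), p ∈ S → ∀ r : ℝ, (x - p 0)^2 + r^2 ≤ ε^2 →
      Icc (p 1 - |r|) (p 1 + |r|) ⊆ slice x := by
    intro x p hp r hr y hy
    have hd1 : |y - p 1| ≤ |r| := by
      rw [abs_le]; constructor <;> [linarith [hy.1]; linarith [hy.2]]
    have : dist (Feq.symm (x, y)) p ≤ ε := by
      rw [Feq_symm_dist]
      have h1 : (y - p 1)^2 ≤ r^2 := by
        rw [← sq_abs (y - p 1), ← sq_abs r]
        exact pow_le_pow_left₀ (abs_nonneg _) hd1 2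
      calc Real.sqrt ((x - p 0)^2 + (y - p 1)^2) ≤ Real.sqrt (ε^2) := by
            apply Real.sqrt_le_sqrt; linarith
        _ = ε := Real.sqrt_sq hε.le
    exact closedBall_subset_cthickening hp ε this
  -- middle slice bound
  have hmid : ∀ x ∈ Ioc 0 d, ENNReal.ofReal (2 * ε) ≤ volume (slice x) := by
    intro x hx
    have hproj : Continuous fun p : E2 => p 0 := (EuclideanSpace.proj (0 : Fin 2)).continuous
    have himg : Icc (0:ℝ) d ⊆ (fun p : E2 => p 0) '' S := by
      apply (hS.image _ hproj.continuousOn).Icc_subset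
      · exact ⟨0, h0, rfl⟩
      · exact ⟨v, hv, hv0⟩
    obtain ⟨p, hp, hpx⟩ := himg ⟨hx.1.le, hx.2⟩
    have hsub : Icc (p 1 - |ε|) (p 1 + |ε|) ⊆ slice x := by
      apply hball x p hp ε
      rw [show p 0 = x from hpx]; simp
    calc ENNReal.ofReal (2 * ε) = volume (Icc (p 1 - |ε|) (p 1 + |ε|)) := by
          rw [Real.volume_Icc, abs_of_pos hε]; ring_nf
      _ ≤ volume (slice x) := measure_mono hsub
  -- side slice bounds
  have hside : ∀ (c : ℝ) (p : E2), p ∈ S → p 0 = c → p 1 = 0 → ∀ x, (x - c)^2 ≤ ε^2 →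
      ENNReal.ofReal (2 * Real.sqrt (ε^2 - (x - c)^2)) ≤ volume (slice x) := by
    intro c p hp hpc hp1 x hx
    set r := Real.sqrt (ε^2 - (x - c)^2) with hrdef
    have hr0 : 0 ≤ r := Real.sqrt_nonneg _
    have hsub : Icc (p 1 - |r|) (p 1 + |r|) ⊆ slice x := by
      apply hball x p hp
      rw [hpc, hrdef, Real.sq_sqrt (by linarith)]; linarith
    calc ENNReal.ofReal (2 * r) = volume (Icc (p 1 - |r|) (p 1 + |r|)) := by
          rw [Real.volume_Icc, abs_of_nonneg hr0]; ring_nf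
      _ ≤ volume (slice x) := measure_mono hsub
  -- lower bound functions measurable
  have hg_meas : Measurable fun x => volume (slice x) := by
    simp_rw [← hsl]
    exact measurable_measure_prodMk_left hTpm
  have hcont1 : Continuous fun x : ℝ => 2 * Real.sqrt (ε^2 - x^2) :=
    continuous_const.mul (Real.continuous_sqrt.comp (continuous_const.sub (continuous_pow 2)))
  set U1 : Set ℝ := Ioc (-ε) 0 with hU1
  set U2 : Set ℝ := Ioc 0 d with hU2
  set U3 : Set ℝ := Ioc d (d+ε) with hU3
  have hL : ∀ x ∈ U1, ENNReal.ofReal (2 * Real.sqrt (ε^2 - x^2)) ≤ volume (slice x) := by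
    intro x hx
    have h := hside 0 0 h0 rfl rfl x (by nlinarith [hx.1, hx.2])
    simpa using h
  have hR : ∀ x ∈ U3, ENNReal.ofReal (2 * Real.sqrt (ε^2 - (x-d)^2)) ≤ volume (slice x) := by
    intro x hx
    exact hside d v hv hv0 hv1 x (by nlinarith [hx.1, hx.2])
  have hI2 : ENNReal.ofReal (2*ε*d) ≤ ∫⁻ x in U2, volume (slice x) := by
    calc ENNReal.ofReal (2*ε*d) = ENNReal.ofReal (2*ε) * volume U2 := by
          rw [hU2, Real.volume_Ioc, ← ENNReal.ofReal_mul (by positivity)]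
          ring_nf
      _ = ∫⁻ _x in U2, ENNReal.ofReal (2*ε) := (setLIntegral_const _ _).symm
      _ ≤ ∫⁻ x in U2, volume (slice x) := setLIntegral_mono hg_meas hmid
  have hint : ∀ u w : ℝ, u ≤ w → ENNReal.ofReal (∫ x in u..w, 2 * Real.sqrt (ε^2 - x^2))
      = ∫⁻ x in Ioc u w, ENNReal.ofReal (2 * Real.sqrt (ε^2 - x^2)) := by
    intro u w huw
    rw [intervalIntegral.integral_of_le huw]
    exact ofReal_integral_eq_lintegral_ofReal (hcont1.integrableOn_Ioc)
      (Eventually.of_forall fun x => by positivity)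
  have hI1 : ENNReal.ofReal (∫ x in (-ε)..(0:ℝ), 2 * Real.sqrt (ε^2 - x^2))
      ≤ ∫⁻ x in U1, volume (slice x) := by
    rw [hint _ _ (by linarith)]
    exact setLIntegral_mono hg_meas hL
  have hI3 : ENNReal.ofReal (∫ x in (0:ℝ)..ε, 2 * Real.sqrt (ε^2 - x^2))
      ≤ ∫⁻ x in U3, volume (slice x) := by
    have htr : ∫ x in d..(d+ε), 2 * Real.sqrt (ε^2 - (x-d)^2) = ∫ x in (0:ℝ)..ε, 2 * Real.sqrt (ε^2 - x^2) := by
      have := intervalIntegral.integral_comp_sub_right (fun y => 2 * Real.sqrt (ε^2 - y^2)) d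
        (a := d) (b := d + ε)
      simpa using this
    rw [← htr, intervalIntegral.integral_of_le (by linarith : d ≤ d + ε)]
    have hc2 : Continuous fun x : ℝ => 2 * Real.sqrt (ε^2 - (x-d)^2) :=
      continuous_const.mul (Real.continuous_sqrt.comp (continuous_const.sub ((continuous_id.sub continuous_const).pow 2)))
    rw [ofReal_integral_eq_lintegral_ofReal hc2.integrableOn_Ioc
      (Eventually.of_forall fun x => by positivity)]
    exact setLIntegral_mono hg_meas hR
  have hnn1 : 0 ≤ ∫ x in (-ε)..(0:ℝ), 2 * Real.sqrt (ε^2 - x^2) :=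
    intervalIntegral.integral_nonneg (by linarith) (fun x _ => by positivity)
  have hsum13 : ENNReal.ofReal (π * ε^2)
      = ENNReal.ofReal (∫ x in (-ε)..(0:ℝ), 2 * Real.sqrt (ε^2 - x^2))
        + ENNReal.ofReal (∫ x in (0:ℝ)..ε, 2 * Real.sqrt (ε^2 - x^2)) := by
    rw [← ENNReal.ofReal_add hnn1
      (intervalIntegral.integral_nonneg hε.le (fun x _ => by positivity)),
      intervalIntegral.integral_add_adjacent_intervals (hcont1.intervalIntegrable _ _)
        (hcont1.intervalIntegrable _ _), sqrt_int hε]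
  have hdisj12 : Disjoint U1 U2 := Set.Ioc_disjoint_Ioc_of_le le_rfl
  have hdisj3 : Disjoint (U1 ∪ U2) U3 := by
    rw [Set.disjoint_union_left]
    constructor
    · exact Set.Ioc_disjoint_Ioc.mpr (le_trans inf_le_left (le_trans hd le_sup_right))
    · exact Set.Ioc_disjoint_Ioc_of_le le_rfl
  calc ENNReal.ofReal (2 * ε * d + π * ε ^ 2)
      = ENNReal.ofReal (2*ε*d) + ENNReal.ofReal (π * ε^2) :=
        ENNReal.ofReal_add (by positivity) (by positivity)
    _ ≤ (∫⁻ x in U2, volume (slice x))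
        + ((∫⁻ x in U1, volume (slice x)) + (∫⁻ x in U3, volume (slice x))) := by
        refine add_le_add hI2 ?_
        rw [hsum13]; exact add_le_add hI1 hI3
    _ = ∫⁻ x in U1 ∪ U2 ∪ U3, volume (slice x) := by
        rw [lintegral_union measurableSet_Ioc hdisj3,
          lintegral_union measurableSet_Ioc hdisj12]
        ring
    _ ≤ ∫⁻ x, volume (slice x) := setLIntegral_le_lintegral _ _
    _ = volume Tp := hfub.symm
    _ = volume T := hvolT

theorem stmt_4 (a b : ℝ) (hab : a ≤ b) (g : ℝ → EuclideanSpace ℝ (Fin 2))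
    (hg : ContinuousOn g (Icc a b))
    (hbdd : Bornology.IsBounded (g '' Icc a b))
    (ε : ℝ) (hε : 0 < ε) :
    ENNReal.ofReal (2 * ε * Metric.diam (g '' Icc a b) + π * ε ^ 2) ≤
      volume (cthickening ε (g '' Icc a b)) := by
  set S : Set E2 := g '' Icc a b with hSdef
  have hSne : S.Nonempty := ⟨g a, a, ⟨le_rfl, hab⟩, rfl⟩
  have hScomp : IsCompact S := isCompact_Icc.image_of_continuousOn hg
  have hSconn : IsPreconnected S := isPreconnected_Icc.image g hg
  set d : ℝ := Metric.diam S with hddef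
  have hd0 : 0 ≤ d := Metric.diam_nonneg
  -- attain diameter
  obtain ⟨⟨z, w⟩, hzw, hmax⟩ := (hScomp.prod hScomp).exists_isMaxOn
    (hSne.prod hSne) (continuous_dist.continuousOn :
      ContinuousOn (fun p : E2 × E2 => dist p.1 p.2) (S ×ˢ S))
  have hz : z ∈ S := hzw.1
  have hw : w ∈ S := hzw.2
  have hdzw : dist z w = d := by
    refine le_antisymm (Metric.dist_le_diam_of_mem hbdd hz hw) ?_
    have hmax' : ∀ q ∈ S ×ˢ S, dist q.1 q.2 ≤ dist z w := by
      rw [isMaxOn_iff] at hmax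
      exact hmax
    exact Metric.diam_le_of_forall_dist_le dist_nonneg
      (fun x hx y hy => hmax' (x, y) (Set.mk_mem_prod hx hy))
  set v : E2 := d • EuclideanSpace.single (0 : Fin 2) (1:ℝ) with hvdef
  set u : E2 := w - z with hudef
  have hu : ‖u‖ = d := by rw [hudef, ← dist_eq_norm, dist_comm, hdzw]
  have hvnorm : ‖v‖ = d := by
    rw [hvdef, norm_smul, EuclideanSpace.norm_single]
    simp [abs_of_nonneg hd0]
  set e : E2 ≃ₗᵢ[ℝ] E2 := Submodule.reflection (Submodule.span ℝ {u - v})ᗮ with hedef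
  have he : e u = v := Submodule.reflection_sub (hu.trans hvnorm.symm)
  set ψ : E2 → E2 := fun p => e (p - z) with hψdef
  have hψiso : Isometry ψ :=
    e.isometry.comp (Isometry.of_dist_eq fun p q => dist_sub_right p q z)
  set S' : Set E2 := ψ '' S with hS'def
  have h0' : (0 : E2) ∈ S' := ⟨z, hz, by simp [hψdef]⟩
  have hv' : v ∈ S' := ⟨w, hw, by rw [hψdef]; exact he⟩
  have hS'conn : IsPreconnected S' := hSconn.image ψ hψiso.continuous.continuousOn
  have hkey := key hd0 hε S' hS'conn h0' hv'
  -- transfer volume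
  set ψinv : E2 → E2 := fun q => e.symm q + z with hψinvdef
  have hψinvψ : ∀ p, ψinv (ψ p) = p := by
    intro p; simp [hψdef, hψinvdef]
  have hψψinv : ∀ q, ψ (ψinv q) = q := by
    intro q; simp [hψdef, hψinvdef]
  have himg : cthickening ε S' = ψ '' cthickening ε S := by
    ext x
    constructor
    · intro hx
      rw [mem_cthickening_iff] at hx
      refine ⟨ψinv x, ?_, hψψinv x⟩
      rw [mem_cthickening_iff]
      have h2 : infEDist x S' = Metric.infEDist (ψinv x) S := by
        conv_lhs => rw [← hψψinv x]
        rw [hS'def]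
        exact infEdist_image hψiso
      rw [← h2]
      exact hx
    · rintro ⟨y, hy, rfl⟩
      rw [mem_cthickening_iff] at hy ⊢
      rw [hS'def, infEdist_image hψiso]
      exact hy
  have hmpinv : MeasurePreserving ψinv volume volume :=
    (measurePreserving_add_right volume z).comp e.symm.measurePreserving
  have hpre : ψ '' cthickening ε S = ψinv ⁻¹' cthickening ε S := by
    ext q
    constructor
    · rintro ⟨p, hp, rfl⟩
      simpa [hψinvψ p] using hp
    · intro hq
      exact ⟨ψinv q, hq, hψψinv q⟩
  calc ENNReal.ofReal (2 * ε * d + π * ε ^ 2)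
      ≤ volume (cthickening ε S') := hkey
    _ = volume (ψinv ⁻¹' cthickening ε S) := by rw [himg, hpre]
    _ = volume (cthickening ε S) :=
        hmpinv.measure_preimage isClosed_cthickening.measurableSet.nullMeasurableSet
end

section
/- Let φ₁ > 1 and let f ∈ C[φ₁,∞) with lim_{φ→∞} f(φ) = 0. Assume there exist positive constants m̅ and M such that for all φ ≥ φ₁: 0 < f(φ) ≤ m̅ φ^{-1}; 0 < f(φ) - f(φ+2π); and length(Γ(φ₁,φ)) ≤ M log φ. Then the spiral Γ = {(f(φ)cos φ, f(φ)sin φ) : φ ≥ φ₁} has box-counting dimension 1. -/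
open Set Filter Real Metric MeasureTheory
open scoped Topology

private lemma spiral_cover_lemma (F : ℝ → (Fin 2 → ℝ)) (a Φ L ε : ℝ) (haΦ : a < Φ)
    (hε : 0 < ε) (hL : 0 ≤ L)
    (hvar : eVariationOn F (Ico a Φ) ≤ ENNReal.ofReal L) :
    ∃ c : ℕ → (Fin 2 → ℝ),
      F '' (Ico a Φ) ⊆ ⋃ k ∈ Finset.range (⌊L / ε⌋₊ + 1), closedBall (c k) ε := by
  set s := Ico a Φ with hs
  have has : a ∈ s := ⟨le_refl a, haΦ⟩
  have hbv : BoundedVariationOn F s :=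
    ne_top_of_le_ne_top ENNReal.ofReal_ne_top hvar
  have hlbv := hbv.locallyBoundedVariationOn
  set v : ℝ → ℝ := fun t => variationOnFromTo F s a t with hv
  have key1 : ∀ t ∈ s, 0 ≤ v t ∧ v t ≤ L := by
    intro t ht
    refine ⟨variationOnFromTo.nonneg_of_le F s ht.1, ?_⟩
    show variationOnFromTo F s a t ≤ L
    rw [variationOnFromTo.eq_of_le F s ht.1]
    exact le_trans (ENNReal.toReal_mono hbv (eVariationOn.mono F inter_subset_left))
      (ENNReal.toReal_le_of_le_ofReal hL hvar)
  have key2 : ∀ u ∈ s, ∀ w ∈ s, u ≤ w → dist (F u) (F w) ≤ v w - v u := by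
    intro u hu w hw huw
    have h1 : dist (F u) (F w) ≤ (eVariationOn F (s ∩ Icc u w)).toReal :=
      (hbv.mono inter_subset_left).dist_le ⟨hu, le_refl u, huw⟩ ⟨hw, huw, le_refl w⟩
    have h2 : (eVariationOn F (s ∩ Icc u w)).toReal = variationOnFromTo F s u w :=
      (variationOnFromTo.eq_of_le F s huw).symm
    have h3 : v u + variationOnFromTo F s u w = v w := variationOnFromTo.add hlbv has hu hw
    linarith [h1, h2.symm ▸ h1]
  classical
  refine ⟨fun k => if h : ∃ t ∈ s, ⌊v t / ε⌋₊ = k then F h.choose else F a, ?_⟩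
  rintro _ ⟨t, ht, rfl⟩
  have h0t := key1 t ht
  have hkmem : ⌊v t / ε⌋₊ ∈ Finset.range (⌊L / ε⌋₊ + 1) := by
    rw [Finset.mem_range, Nat.lt_succ_iff]
    exact Nat.floor_le_floor (by gcongr; exact h0t.2)
  refine mem_iUnion₂.mpr ⟨⌊v t / ε⌋₊, hkmem, ?_⟩
  have hex : ∃ u ∈ s, ⌊v u / ε⌋₊ = ⌊v t / ε⌋₊ := ⟨t, ht, rfl⟩
  dsimp only
  rw [dif_pos hex]
  obtain ⟨hts, hfl⟩ := hex.choose_spec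
  set t' := hex.choose
  have h0t' := key1 t' hts
  have lb1 : (⌊v t / ε⌋₊ : ℝ) * ε ≤ v t := by
    rw [← le_div_iff₀ hε]; exact Nat.floor_le (div_nonneg h0t.1 hε.le)
  have ub1 : v t < (⌊v t / ε⌋₊ + 1 : ℝ) * ε := by
    rw [← div_lt_iff₀ hε]; exact_mod_cast Nat.lt_succ_floor _
  have lb2 : (⌊v t / ε⌋₊ : ℝ) * ε ≤ v t' := by
    rw [← hfl, ← le_div_iff₀ hε]; exact Nat.floor_le (div_nonneg h0t'.1 hε.le)
  have ub2 : v t' < (⌊v t / ε⌋₊ + 1 : ℝ) * ε := by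
    rw [← hfl, ← div_lt_iff₀ hε]; exact_mod_cast Nat.lt_succ_floor _
  rw [mem_closedBall]
  rcases le_total t t' with h | h
  · have := key2 t ht t' hts h
    linarith
  · have := key2 t' hts t ht h
    rw [dist_comm] at this
    linarith

private lemma spiral_lower_aux (S : Set (Fin 2 → ℝ)) (hS : MeasurableSet S) (a b ε : ℝ)
    (hε : 0 ≤ ε)
    (h : ∀ x ∈ Icc a b, ∃ y : ℝ, ∀ z ∈ Icc (y - ε) (y + ε),
      (MeasurableEquiv.finTwoArrow (α := ℝ)).symm (x, z) ∈ S) :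
    ENNReal.ofReal ((b - a) * (2 * ε)) ≤ volume S := by
  set e2 := MeasurableEquiv.finTwoArrow (α := ℝ) with he2
  have hpres := ((volume_preserving_finTwoArrow ℝ).symm e2)
  have hB : MeasurableSet (e2.symm ⁻¹' S) := e2.symm.measurable hS
  have hvol : volume S = volume (e2.symm ⁻¹' S) :=
    (hpres.measure_preimage hS.nullMeasurableSet).symm
  rw [hvol, Measure.volume_eq_prod, Measure.prod_apply hB]
  calc ENNReal.ofReal ((b - a) * (2 * ε))
      = ∫⁻ _ in Icc a b, ENNReal.ofReal (2 * ε) := by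
        rw [setLIntegral_const, Real.volume_Icc, mul_comm,
          ← ENNReal.ofReal_mul (by positivity)]
    _ ≤ ∫⁻ x in Icc a b, volume (Prod.mk x ⁻¹' (e2.symm ⁻¹' S)) := by
        refine setLIntegral_mono' measurableSet_Icc fun x hx => ?_
        obtain ⟨y, hy⟩ := h x hx
        have hsub : Icc (y - ε) (y + ε) ⊆ Prod.mk x ⁻¹' (e2.symm ⁻¹' S) := fun z hz => hy z hz
        calc ENNReal.ofReal (2 * ε) = volume (Icc (y - ε) (y + ε)) := by
              rw [Real.volume_Icc]; ring_nf
          _ ≤ _ := measure_mono hsub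
    _ ≤ ∫⁻ x, volume (Prod.mk x ⁻¹' (e2.symm ⁻¹' S)) := setLIntegral_le_lintegral _ _

private lemma spiral_ball_vol (x : Fin 2 → ℝ) (r : ℝ) (hr : 0 ≤ r) :
    volume (closedBall x r) = ENNReal.ofReal (r ^ 2 * 4) := by
  rw [closedBall_pi _ hr, volume_pi_pi]
  simp only [Real.volume_closedBall]
  rw [Fin.prod_univ_two, ← ENNReal.ofReal_mul (by positivity)]
  ring_nf

private lemma spiral_upper_lemma (φ₁ : ℝ) (hφ₁ : 1 < φ₁) (f : ℝ → ℝ) (m M : ℝ)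
    (hm : 0 < m) (hM : 0 < M)
    (hbd : ∀ φ ≥ φ₁, 0 < f φ ∧ f φ ≤ m * φ⁻¹)
    (hlen : ∀ φ ≥ φ₁,
      eVariationOn (fun ψ => (![f ψ * Real.cos ψ, f ψ * Real.sin ψ] :
        Fin 2 → ℝ)) (Ico φ₁ φ) ≤ ENNReal.ofReal (M * Real.log φ)) :
    ∃ C > 0, ∀ ε : ℝ, 0 < ε → ε < (φ₁ + 1)⁻¹ → ε ≤ Real.exp (-1) →
      volume (cthickening ε
        ((fun φ => (![f φ * Real.cos φ, f φ * Real.sin φ] : Fin 2 → ℝ)) ''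
          Ici φ₁)) ≤ ENNReal.ofReal (C * (ε * Real.log ε⁻¹)) := by
  set F : ℝ → (Fin 2 → ℝ) := fun φ => ![f φ * Real.cos φ, f φ * Real.sin φ] with hF
  have habs : ∀ φ ≥ φ₁, ∀ r, f φ ≤ r → dist (F φ) 0 ≤ r := by
    intro φ hφ r hr
    have hfφ := (hbd φ hφ).1
    refine (dist_pi_le_iff (le_trans hfφ.le hr)).mpr ?_
    rw [Fin.forall_fin_two]
    constructor
    · show dist (f φ * Real.cos φ) 0 ≤ r
      rw [Real.dist_eq, sub_zero, abs_mul]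
      calc |f φ| * |Real.cos φ| ≤ |f φ| * 1 :=
            mul_le_mul_of_nonneg_left (Real.abs_cos_le_one φ) (abs_nonneg _)
        _ = f φ := by rw [mul_one, abs_of_pos hfφ]
        _ ≤ r := hr
    · show dist (f φ * Real.sin φ) 0 ≤ r
      rw [Real.dist_eq, sub_zero, abs_mul]
      calc |f φ| * |Real.sin φ| ≤ |f φ| * 1 :=
            mul_le_mul_of_nonneg_left (Real.abs_sin_le_one φ) (abs_nonneg _)
        _ = f φ := by rw [mul_one, abs_of_pos hfφ]
        _ ≤ r := hr
  refine ⟨4 * (9 * M + 9 + (m + 2)^2) + 1, by positivity, ?_⟩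
  intro ε hε hε1 hε2
  have hεlt1 : ε < 1 := lt_of_lt_of_le hε1 (by rw [inv_le_one_iff₀]; right; linarith)
  have hΦ : φ₁ + 1 < ε⁻¹ := by
    rw [← inv_inv (φ₁ + 1)]
    exact (inv_lt_inv₀ (by positivity) hε).mpr hε1
  have hφ₁Φ : φ₁ < ε⁻¹ := by linarith
  have hlog1 : 1 ≤ Real.log ε⁻¹ := by
    rw [Real.log_inv, le_neg]
    calc Real.log ε ≤ Real.log (Real.exp (-1)) := Real.log_le_log hε hε2
      _ = -1 := Real.log_exp _
  set L : ℝ := M * Real.log ε⁻¹ with hL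
  have hL0 : 0 ≤ L := by positivity
  obtain ⟨c, hcov⟩ := spiral_cover_lemma F φ₁ ε⁻¹ L ε hφ₁Φ hε hL0 (hlen ε⁻¹ hφ₁Φ.le)
  set N := ⌊L / ε⌋₊ + 1 with hN
  have htail : F '' Ici ε⁻¹ ⊆ closedBall 0 (m * ε) := by
    rintro _ ⟨φ, hφ, rfl⟩
    rw [mem_closedBall]
    refine habs φ (le_trans hφ₁Φ.le hφ) _ ?_
    calc f φ ≤ m * φ⁻¹ := (hbd φ (le_trans hφ₁Φ.le hφ)).2
      _ ≤ m * ε := by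
          gcongr
          rw [← inv_inv ε]
          exact inv_anti₀ (by positivity) hφ
  have hsub : cthickening ε (F '' Ici φ₁) ⊆
      (⋃ k ∈ Finset.range N, closedBall (c k) (3 * ε)) ∪ closedBall 0 ((m + 2) * ε) := by
    have hsplit : F '' Ici φ₁ ⊆
        (⋃ k ∈ Finset.range N, closedBall (c k) ε) ∪ closedBall 0 (m * ε) := by
      rintro _ ⟨φ, hφ, rfl⟩
      rcases lt_or_ge φ ε⁻¹ with h | h
      · exact Or.inl (hcov ⟨φ, ⟨hφ, h⟩, rfl⟩)
      · exact Or.inr (htail ⟨φ, h, rfl⟩)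
    refine le_trans (cthickening_subset_of_subset ε hsplit) ?_
    refine le_trans (cthickening_subset_iUnion_closedBall_of_lt _ (by positivity)
      (by linarith : ε < 2 * ε)) ?_
    rintro x hx
    rw [mem_iUnion₂] at hx
    obtain ⟨y, hy, hxy⟩ := hx
    rcases hy with hy | hy
    · rw [mem_iUnion₂] at hy
      obtain ⟨k, hk, hyk⟩ := hy
      left
      rw [mem_iUnion₂]
      refine ⟨k, hk, ?_⟩
      rw [mem_closedBall] at *
      calc dist x (c k) ≤ dist x y + dist y (c k) := dist_triangle _ _ _
        _ ≤ 2 * ε + ε := add_le_add hxy hyk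
        _ = 3 * ε := by ring
    · right
      rw [mem_closedBall] at *
      calc dist x 0 ≤ dist x y + dist y 0 := dist_triangle _ _ _
        _ ≤ 2 * ε + m * ε := add_le_add hxy hy
        _ = (m + 2) * ε := by ring
  calc volume (cthickening ε (F '' Ici φ₁))
      ≤ volume ((⋃ k ∈ Finset.range N, closedBall (c k) (3 * ε)) ∪
          closedBall 0 ((m + 2) * ε)) := measure_mono hsub
    _ ≤ volume (⋃ k ∈ Finset.range N, closedBall (c k) (3 * ε)) +
          volume (closedBall (0 : Fin 2 → ℝ) ((m + 2) * ε)) := measure_union_le _ _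
    _ ≤ (∑ k ∈ Finset.range N, volume (closedBall (c k) (3 * ε))) +
          volume (closedBall (0 : Fin 2 → ℝ) ((m + 2) * ε)) := by
        gcongr
        exact measure_biUnion_finset_le _ _
    _ = N * ENNReal.ofReal ((3 * ε) ^ 2 * 4) + ENNReal.ofReal (((m + 2) * ε) ^ 2 * 4) := by
        have hb : ∀ k : ℕ, volume (closedBall (c k) (3 * ε)) = ENNReal.ofReal ((3 * ε) ^ 2 * 4) :=
          fun k => spiral_ball_vol _ _ (by positivity)
        rw [spiral_ball_vol _ _ (by positivity)]
        simp only [hb]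
        rw [Finset.sum_const, Finset.card_range, nsmul_eq_mul]
    _ ≤ ENNReal.ofReal ((L / ε + 1) * ((3 * ε) ^ 2 * 4) + ((m + 2) * ε) ^ 2 * 4) := by
        rw [ENNReal.ofReal_add (by positivity) (by positivity)]
        gcongr
        rw [← ENNReal.ofReal_natCast N, ← ENNReal.ofReal_mul (by positivity)]
        refine ENNReal.ofReal_le_ofReal ?_
        have hN' : (N : ℝ) ≤ L / ε + 1 := by
          rw [hN]
          push_cast
          have := Nat.floor_le (a := L / ε) (by positivity)
          linarith
        have := mul_le_mul_of_nonneg_right hN' (by positivity : (0:ℝ) ≤ (3 * ε) ^ 2 * 4)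
        linarith
    _ ≤ ENNReal.ofReal ((4 * (9 * M + 9 + (m + 2)^2) + 1) * (ε * Real.log ε⁻¹)) := by
        refine ENNReal.ofReal_le_ofReal ?_
        have hεlog : ε ≤ ε * Real.log ε⁻¹ := le_mul_of_one_le_right hε.le hlog1
        have hε2log : ε ^ 2 ≤ ε * Real.log ε⁻¹ := by
          calc ε ^ 2 = ε * ε := sq ε
            _ ≤ ε * 1 := by nlinarith
            _ ≤ ε * Real.log ε⁻¹ := by nlinarith
        have expand : (L / ε + 1) * ((3 * ε) ^ 2 * 4) + ((m + 2) * ε) ^ 2 * 4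
            = 36 * (L * ε) + 36 * ε ^ 2 + 4 * (m + 2) ^ 2 * ε ^ 2 := by
          field_simp
          ring
        rw [expand, hL]
        have hC0 : 0 ≤ ε * Real.log ε⁻¹ := mul_nonneg hε.le (by linarith)
        have hA : 36 * ε ^ 2 ≤ 36 * (ε * Real.log ε⁻¹) := by linarith
        have hB : 4 * (m + 2) ^ 2 * ε ^ 2 ≤ 4 * (m + 2) ^ 2 * (ε * Real.log ε⁻¹) := by
          have := mul_le_mul_of_nonneg_left hε2log (by positivity : (0:ℝ) ≤ 4 * (m + 2) ^ 2)
          linarith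
        nlinarith [hA, hB, hC0]

theorem stmt_9 (φ₁ : ℝ) (hφ₁ : 1 < φ₁) (f : ℝ → ℝ)
    (hf : ContinuousOn f (Ici φ₁))
    (hlim : Tendsto f atTop (nhds 0))
    (m M : ℝ) (hm : 0 < m) (hM : 0 < M)
    (hbd : ∀ φ ≥ φ₁, 0 < f φ ∧ f φ ≤ m * φ⁻¹)
    (hdec : ∀ φ ≥ φ₁, 0 < f φ - f (φ + 2 * π))
    (hlen : ∀ φ ≥ φ₁,
      eVariationOn (fun ψ => (WithLp.toLp 2 ![f ψ * Real.cos ψ, f ψ * Real.sin ψ] :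
        EuclideanSpace ℝ (Fin 2))) (Ico φ₁ φ) ≤ ENNReal.ofReal (M * Real.log φ)) :
    Tendsto (fun ε : ℝ =>
        Real.log (volume (cthickening ε
          ((fun φ => (WithLp.toLp 2 ![f φ * Real.cos φ, f φ * Real.sin φ] : EuclideanSpace ℝ (Fin 2))) ''
            Ici φ₁))).toReal / Real.log ε)
      (nhdsWithin 0 (Ioi 0)) (nhds 1) := by
  have hlen' : ∀ φ ≥ φ₁, eVariationOn (fun ψ => (![f ψ * Real.cos ψ, f ψ * Real.sin ψ] :
      Fin 2 → ℝ)) (Ico φ₁ φ) ≤ ENNReal.ofReal (M * Real.log φ) := by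
    intro φ hφ
    refine le_trans ?_ (hlen φ hφ)
    have := (PiLp.lipschitzWith_ofLp 2 (fun _ : Fin 2 => ℝ)).lipschitzOnWith.comp_eVariationOn_le
      (t := univ) (g := fun ψ => (WithLp.toLp 2 ![f ψ * Real.cos ψ, f ψ * Real.sin ψ] :
        EuclideanSpace ℝ (Fin 2))) (s := Ico φ₁ φ) (mapsTo_univ _ _)
    have h2 : eVariationOn (fun ψ => (![f ψ * Real.cos ψ, f ψ * Real.sin ψ] : Fin 2 → ℝ))
        (Ico φ₁ φ) = eVariationOn (WithLp.ofLp ∘ fun ψ => (WithLp.toLp 2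
          ![f ψ * Real.cos ψ, f ψ * Real.sin ψ] : EuclideanSpace ℝ (Fin 2))) (Ico φ₁ φ) := rfl
    rw [h2]
    refine this.trans ?_
    simp
  set F : ℝ → (Fin 2 → ℝ) := fun φ => ![f φ * Real.cos φ, f φ * Real.sin φ] with hF
  set Γ : Set (Fin 2 → ℝ) := F '' Ici φ₁ with hΓ
  set G : ℝ → EuclideanSpace ℝ (Fin 2) :=
    fun φ => WithLp.toLp 2 ![f φ * Real.cos φ, f φ * Real.sin φ] with hG
  set ΓE : Set (EuclideanSpace ℝ (Fin 2)) := G '' Ici φ₁ with hΓE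
  have hd2 : ∀ x y : Fin 2 → ℝ,
      dist (WithLp.toLp 2 x : EuclideanSpace ℝ (Fin 2)) (WithLp.toLp 2 y) ≤ 2 * dist x y := by
    intro x y
    rw [EuclideanSpace.dist_eq, Real.sqrt_le_iff]
    refine ⟨by positivity, ?_⟩
    have h0 := dist_le_pi_dist x y 0
    have h1 := dist_le_pi_dist x y 1
    have h0' := dist_nonneg (x := x 0) (y := y 0)
    have h1' := dist_nonneg (x := x 1) (y := y 1)
    simp only [Fin.sum_univ_two, WithLp.ofLp_toLp]
    nlinarith
  -- two special angles
  set k : ℕ := ⌈φ₁⌉₊ with hk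
  have hkφ₁ : φ₁ ≤ (k : ℝ) := Nat.le_ceil φ₁
  have hπ : (3.141592 : ℝ) < π := Real.pi_gt_d6
  set φb : ℝ := (k : ℝ) * (2 * π) with hφb
  have hφbφ₁ : φ₁ ≤ φb := by
    have hk0 : (0 : ℝ) ≤ (k : ℝ) := Nat.cast_nonneg k
    nlinarith
  set φa : ℝ := π + φb with hφa
  have hφaφ₁ : φ₁ ≤ φa := by nlinarith
  have hcosb : Real.cos φb = 1 := Real.cos_nat_mul_two_pi k
  have hcosa : Real.cos φa = -1 := by
    rw [hφa, hφb, Real.cos_add_nat_mul_two_pi, Real.cos_pi]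
  have hfa : 0 < f φa := (hbd φa hφaφ₁).1
  have hfb : 0 < f φb := (hbd φb hφbφ₁).1
  set clow : ℝ := (f φb + f φa) * 2 with hclow
  have hclow0 : 0 < clow := by positivity
  -- intermediate value for the first coordinate
  have hIVT : Icc (-(f φa)) (f φb) ⊆ (fun φ => f φ * Real.cos φ) '' Ici φ₁ := by
    have h := IsPreconnected.intermediate_value isPreconnected_Ici hφaφ₁ hφbφ₁
      (hf.mul Real.continuous_cos.continuousOn)
    simp only [Pi.mul_apply, hcosa, hcosb] at h
    simpa using h
  -- boundedness / finiteness
  have hΓbd : Γ ⊆ closedBall 0 m := by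
    rintro _ ⟨φ, hφ, rfl⟩
    rw [mem_closedBall]
    have hfφ := (hbd φ hφ).1
    have hfm : f φ ≤ m := by
      have h1 : φ⁻¹ ≤ 1 := by
        rw [inv_le_one_iff₀]; right; linarith [hφ.out]
      calc f φ ≤ m * φ⁻¹ := (hbd φ hφ).2
        _ ≤ m * 1 := by gcongr
        _ = m := mul_one m
    refine (dist_pi_le_iff (le_trans hfφ.le hfm)).mpr ?_
    rw [Fin.forall_fin_two]
    constructor
    · show dist (f φ * Real.cos φ) 0 ≤ m
      rw [Real.dist_eq, sub_zero, abs_mul]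
      calc |f φ| * |Real.cos φ| ≤ |f φ| * 1 :=
            mul_le_mul_of_nonneg_left (Real.abs_cos_le_one φ) (abs_nonneg _)
        _ = f φ := by rw [mul_one, abs_of_pos hfφ]
        _ ≤ m := hfm
    · show dist (f φ * Real.sin φ) 0 ≤ m
      rw [Real.dist_eq, sub_zero, abs_mul]
      calc |f φ| * |Real.sin φ| ≤ |f φ| * 1 :=
            mul_le_mul_of_nonneg_left (Real.abs_sin_le_one φ) (abs_nonneg _)
        _ = f φ := by rw [mul_one, abs_of_pos hfφ]
        _ ≤ m := hfm
  have hfin : ∀ ε : ℝ, volume (cthickening ε Γ) ≠ ⊤ :=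
    fun ε => ((isBounded_closedBall.subset hΓbd).cthickening.measure_lt_top).ne
  have hvolE : ∀ ε : ℝ, volume (cthickening ε ΓE) =
      volume ((WithLp.toLp 2 : (Fin 2 → ℝ) → EuclideanSpace ℝ (Fin 2)) ⁻¹' cthickening ε ΓE) :=
    fun ε => ((PiLp.volume_preserving_toLp (Fin 2)).measure_preimage
      isClosed_cthickening.measurableSet.nullMeasurableSet).symm
  have hupE : ∀ ε : ℝ, volume (cthickening ε ΓE) ≤ volume (cthickening ε Γ) := by
    intro ε
    rw [hvolE ε]
    refine measure_mono ?_
    intro x hx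
    rw [mem_preimage, mem_cthickening_iff] at hx
    rw [mem_cthickening_iff]
    refine le_trans ?_ hx
    refine le_infEDist.2 ?_
    rintro _ ⟨φ, hφ, rfl⟩
    refine le_trans (infEDist_le_edist_of_mem (mem_image_of_mem F hφ)) ?_
    have := (PiLp.lipschitzWith_ofLp 2 (fun _ : Fin 2 => ℝ)) (WithLp.toLp 2 x) (G φ)
    simpa [hF, hG] using this
  have hfinE : ∀ ε : ℝ, volume (cthickening ε ΓE) ≠ ⊤ :=
    fun ε => ne_top_of_le_ne_top (hfin ε) (hupE ε)
  -- lower volume bound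
  have hlow : ∀ ε : ℝ, 0 < ε → ENNReal.ofReal (clow * (ε / 2)) ≤
      volume ((WithLp.toLp 2 : (Fin 2 → ℝ) → EuclideanSpace ℝ (Fin 2)) ⁻¹' cthickening ε ΓE) := by
    intro ε hε
    have h0 : ENNReal.ofReal (clow * (ε / 2)) =
        ENNReal.ofReal ((f φb - -(f φa)) * (2 * (ε / 2))) := by
      rw [hclow]; ring_nf
    rw [h0]
    refine spiral_lower_aux _ ((PiLp.volume_preserving_toLp (Fin 2)).measurable
      isClosed_cthickening.measurableSet) _ _ _ (by positivity) ?_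
    intro x hx
    obtain ⟨φ, hφ, hgφ⟩ := hIVT hx
    refine ⟨f φ * Real.sin φ, fun z hz => ?_⟩
    have hmem : G φ ∈ ΓE := mem_image_of_mem G hφ
    refine closedBall_subset_cthickening hmem ε ?_
    rw [mem_closedBall]
    refine le_trans (hd2 _ (F φ)) ?_
    rw [← le_div_iff₀' (by norm_num : (0:ℝ) < 2)]
    refine (dist_pi_le_iff (by positivity)).mpr ?_
    rw [Fin.forall_fin_two]
    constructor
    · show dist x (f φ * Real.cos φ) ≤ ε / 2
      have hgφ' : f φ * Real.cos φ = x := hgφ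
      rw [← hgφ', dist_self]
      positivity
    · show dist z (f φ * Real.sin φ) ≤ ε / 2
      rw [Real.dist_eq, abs_le]
      constructor <;> [linarith [hz.1] ; linarith [hz.2]]
  -- upper volume bound
  obtain ⟨C, hC, hup⟩ := spiral_upper_lemma φ₁ hφ₁ f m M hm hM hbd hlen'
  -- setup for the limit
  set ε₀ : ℝ := min (φ₁ + 1)⁻¹ (Real.exp (-1)) with hε₀
  have hε₀pos : 0 < ε₀ := lt_min (by positivity) (Real.exp_pos _)
  have hε₀lt1 : ε₀ < 1 := lt_of_le_of_lt (min_le_right _ _)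
    (Real.exp_lt_one_iff.mpr (by norm_num))
  have hmem₀ : Ioo (0 : ℝ) ε₀ ∈ 𝓝[>] (0 : ℝ) := Ioo_mem_nhdsGT_of_mem ⟨le_refl 0, hε₀pos⟩
  have hmem₁ : Ioo (0 : ℝ) 1 ∈ 𝓝[>] (0 : ℝ) := Ioo_mem_nhdsGT_of_mem ⟨le_refl 0, one_pos⟩
  set clow2 : ℝ := clow / 2 with hclow2
  have hclow20 : 0 < clow2 := by positivity
  have hVbounds : ∀ ε ∈ Ioo (0 : ℝ) ε₀,
      clow2 * ε ≤ (volume (cthickening ε ΓE)).toReal ∧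
      (volume (cthickening ε ΓE)).toReal ≤ C * (ε * Real.log ε⁻¹) := by
    intro ε ⟨hε, hεε₀⟩
    constructor
    · have hl := hlow ε hε
      rw [show clow * (ε / 2) = clow2 * ε by rw [hclow2]; ring, ← hvolE ε] at hl
      exact (ENNReal.ofReal_le_iff_le_toReal (hfinE ε)).mp hl
    · refine ENNReal.toReal_le_of_le_ofReal ?_ ((hupE ε).trans (hup ε hε
          (lt_of_lt_of_le hεε₀ (min_le_left _ _)) (le_of_lt (lt_of_lt_of_le hεε₀ (min_le_right _ _)))))
      have hεlt1 : ε < 1 := lt_trans hεε₀ hε₀lt1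
      have : 0 < Real.log ε⁻¹ := Real.log_pos (one_lt_inv_iff₀.mpr ⟨hε, hεlt1⟩)
      positivity
  -- the two comparison functions tend to 1
  have hloginv : Tendsto (fun ε : ℝ => (Real.log ε)⁻¹) (𝓝[>] (0:ℝ)) (𝓝 0) := by
    have h1 : Tendsto (fun ε : ℝ => -Real.log ε) (𝓝[>] (0:ℝ)) atTop :=
      tendsto_neg_atBot_atTop.comp Real.tendsto_log_nhdsGT_zero
    have h3 := h1.inv_tendsto_atTop.neg
    simp only [Pi.inv_apply, Pi.neg_apply, inv_neg, neg_neg, neg_zero] at h3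
    exact h3
  have htendsto_low : Tendsto (fun ε : ℝ => Real.log (clow2 * ε) / Real.log ε)
      (𝓝[>] (0:ℝ)) (𝓝 1) := by
    have hbase : Tendsto (fun ε : ℝ => Real.log clow2 * (Real.log ε)⁻¹ + 1)
        (𝓝[>] (0:ℝ)) (𝓝 1) := by
      have := (hloginv.const_mul (Real.log clow2)).add_const 1
      simpa using this
    refine hbase.congr' ?_
    filter_upwards [hmem₁] with ε hε
    have hε0 : (0:ℝ) < ε := hε.1
    have hlogε : Real.log ε ≠ 0 := (Real.log_neg hε0 hε.2).ne
    rw [Real.log_mul hclow20.ne' hε0.ne', add_div, div_self hlogε, div_eq_mul_inv]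
  have htendsto_high : Tendsto (fun ε : ℝ => Real.log (C * (ε * Real.log ε⁻¹)) / Real.log ε)
      (𝓝[>] (0:ℝ)) (𝓝 1) := by
    have h3 : Tendsto (fun ε : ℝ => Real.log (Real.log ε⁻¹) / Real.log ε⁻¹)
        (𝓝[>] (0:ℝ)) (𝓝 0) := by
      have hcomp : Tendsto (fun ε : ℝ => Real.log ε⁻¹) (𝓝[>] (0:ℝ)) atTop :=
        Real.tendsto_log_atTop.comp tendsto_inv_nhdsGT_zero
      exact (Real.isLittleO_log_id_atTop.tendsto_div_nhds_zero).comp hcomp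
    have hbase : Tendsto (fun ε : ℝ =>
        Real.log C * (Real.log ε)⁻¹ + 1 + -(Real.log (Real.log ε⁻¹) / Real.log ε⁻¹))
        (𝓝[>] (0:ℝ)) (𝓝 1) := by
      have := ((hloginv.const_mul (Real.log C)).add_const 1).add h3.neg
      simpa using this
    refine hbase.congr' ?_
    filter_upwards [hmem₀] with ε hε
    have hε0 : (0:ℝ) < ε := hε.1
    have hεlt1 : ε < 1 := lt_trans hε.2 hε₀lt1
    have hlogεneg : Real.log ε < 0 := Real.log_neg hε0 hεlt1
    have hlogε : Real.log ε ≠ 0 := hlogεneg.ne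
    have hloginvpos : 0 < Real.log ε⁻¹ := Real.log_pos (one_lt_inv_iff₀.mpr ⟨hε0, hεlt1⟩)
    have hprod : ε * Real.log ε⁻¹ ≠ 0 := by positivity
    rw [Real.log_mul hC.ne' hprod, Real.log_mul hε0.ne' hloginvpos.ne']
    rw [add_div, add_div, div_self hlogε, div_eq_mul_inv (Real.log C)]
    have : Real.log (Real.log ε⁻¹) / Real.log ε
        = -(Real.log (Real.log ε⁻¹) / Real.log ε⁻¹) := by
      rw [Real.log_inv, div_neg]
      ring
    rw [this]
    ring
  -- final squeeze
  refine tendsto_of_tendsto_of_tendsto_of_le_of_le' htendsto_high htendsto_low ?_ ?_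
  · filter_upwards [hmem₀] with ε hε
    have hε0 : (0:ℝ) < ε := hε.1
    have hεlt1 : ε < 1 := lt_trans hε.2 hε₀lt1
    have hlogεneg : Real.log ε < 0 := Real.log_neg hε0 hεlt1
    obtain ⟨hl, hu⟩ := hVbounds ε hε
    have hVpos : 0 < (volume (cthickening ε ΓE)).toReal := lt_of_lt_of_le (by positivity) hl
    have : Real.log ((volume (cthickening ε ΓE)).toReal) ≤ Real.log (C * (ε * Real.log ε⁻¹)) :=
      Real.log_le_log hVpos hu
    exact div_le_div_of_nonpos_of_le hlogεneg.le this
  · filter_upwards [hmem₀] with ε hε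
    have hε0 : (0:ℝ) < ε := hε.1
    have hεlt1 : ε < 1 := lt_trans hε.2 hε₀lt1
    have hlogεneg : Real.log ε < 0 := Real.log_neg hε0 hεlt1
    obtain ⟨hl, hu⟩ := hVbounds ε hε
    have : Real.log (clow2 * ε) ≤ Real.log ((volume (cthickening ε ΓE)).toReal) :=
      Real.log_le_log (by positivity) hl
    exact div_le_div_of_nonpos_of_le hlogεneg.le this
end

section
/- Let φ₁ > 1 and let f ∈ C¹[φ₁,∞) with lim_{φ→∞} f(φ) = 0. Assume there exist positive constants m̅ and K such that 0 < f(φ) ≤ m̅ φ^{-1} and -K φ^{-1} ≤ f'(φ) ≤ 0 for all φ ≥ φ₁, and that f' is not identically zero on [φ,φ+2π) for each fixed φ ≥ φ₁. Then Γ = {(f(φ)cos φ, f(φ)sin φ) : φ ≥ φ₁} has box-counting dimension 1. -/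
open Set Filter Real Metric MeasureTheory


lemma aux_log1p_div : Tendsto (fun x : ℝ => Real.log (1 + x) / x) atTop (nhds 0) := by
  have h1 : Tendsto (fun y : ℝ => Real.log y / y) atTop (nhds 0) :=
    Real.isLittleO_log_id_atTop.tendsto_div_nhds_zero
  have h2 : Tendsto (fun x : ℝ => (1 : ℝ) + x) atTop atTop :=
    tendsto_atTop_add_const_left _ _ tendsto_id
  have h3 : Tendsto (fun x : ℝ => Real.log (1 + x) / (1 + x)) atTop (nhds 0) := h1.comp h2
  have h4 : Tendsto (fun x : ℝ => (1 + x) / x) atTop (nhds 1) := by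
    have h5 : Tendsto (fun x : ℝ => x⁻¹ + 1) atTop (nhds 1) := by
      simpa using (tendsto_inv_atTop_zero (𝕜 := ℝ)).add (tendsto_const_nhds (x := (1:ℝ)))
    refine h5.congr' ?_
    filter_upwards [eventually_gt_atTop 0] with x hx
    field_simp
  have h6 := h3.mul h4
  rw [zero_mul] at h6
  refine h6.congr' ?_
  filter_upwards [eventually_gt_atTop 0] with x hx
  have hx1 : (0:ℝ) < 1 + x := by linarith
  field_simp

lemma aux_squeeze (V : ℝ → ℝ) (A c ε₀ : ℝ) (hA : 1 ≤ A) (hc : 0 < c) (hε₀ : 0 < ε₀)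
    (hε₀1 : ε₀ ≤ Real.exp (-1))
    (h1 : ∀ ε : ℝ, 0 < ε → ε ≤ ε₀ → c * ε ≤ V ε)
    (h2 : ∀ ε : ℝ, 0 < ε → ε ≤ ε₀ → V ε ≤ A * (ε * (1 + Real.log ε⁻¹))) :
    Tendsto (fun ε => Real.log (V ε) / Real.log ε) (nhdsWithin 0 (Ioi 0)) (nhds 1) := by
  have hεsmall : ∀ᶠ ε in nhdsWithin (0:ℝ) (Ioi 0), ε ∈ Ioc (0:ℝ) ε₀ :=
    Ioc_mem_nhdsGT_of_mem ⟨le_refl (0:ℝ), hε₀⟩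
  have key : ∀ ε ∈ Ioc (0:ℝ) ε₀, Real.log ε ≤ -1 := by
    rintro ε ⟨hε0, hεe⟩
    calc Real.log ε ≤ Real.log (Real.exp (-1)) := Real.log_le_log hε0 (hεe.trans hε₀1)
      _ = -1 := Real.log_exp _
  -- limits of comparison functions
  have hu : Tendsto (fun ε : ℝ => Real.log ε⁻¹) (nhdsWithin 0 (Ioi 0)) atTop :=
    Real.tendsto_log_atTop.comp tendsto_inv_nhdsGT_zero
  have hloginv : Tendsto (fun ε : ℝ => (Real.log ε)⁻¹) (nhdsWithin 0 (Ioi 0)) (nhds 0) := by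
    have h := hu.inv_tendsto_atTop
    have h' : Tendsto (fun ε : ℝ => -(Real.log ε⁻¹)⁻¹) (nhdsWithin 0 (Ioi 0)) (nhds 0) := by
      simpa using h.neg
    refine h'.congr ?_
    intro ε
    rw [Real.log_inv, inv_neg, neg_neg]
  have hthird : Tendsto (fun ε : ℝ => Real.log (1 + Real.log ε⁻¹) / Real.log ε)
      (nhdsWithin 0 (Ioi 0)) (nhds 0) := by
    have h := (aux_log1p_div.comp hu).neg
    rw [neg_zero] at h
    refine h.congr ?_
    intro ε
    simp only [Function.comp]
    rw [Real.log_inv]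
    rw [div_neg, neg_neg]
  have hg : Tendsto (fun ε : ℝ => Real.log A * (Real.log ε)⁻¹ + 1 +
      Real.log (1 + Real.log ε⁻¹) / Real.log ε) (nhdsWithin 0 (Ioi 0)) (nhds 1) := by
    have t1 := (hloginv.const_mul (Real.log A)).add (tendsto_const_nhds (x := (1:ℝ)))
    have := t1.add hthird
    simpa using this
  have hh : Tendsto (fun ε : ℝ => Real.log c * (Real.log ε)⁻¹ + 1)
      (nhdsWithin 0 (Ioi 0)) (nhds 1) := by
    have := (hloginv.const_mul (Real.log c)).add (tendsto_const_nhds (x := (1:ℝ)))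
    simpa using this
  refine tendsto_of_tendsto_of_tendsto_of_le_of_le' hg hh ?_ ?_
  · -- lower bound on the ratio
    filter_upwards [hεsmall] with ε hε
    obtain ⟨hε0, hεe⟩ := hε
    have hlog := key ε ⟨hε0, hεe⟩
    have hlogneg : Real.log ε < 0 := by linarith
    have hlogne : Real.log ε ≠ 0 := ne_of_lt hlogneg
    have hu1 : 1 ≤ Real.log ε⁻¹ := by rw [Real.log_inv]; linarith
    have hVpos : 0 < V ε := lt_of_lt_of_le (by positivity) (h1 ε hε0 hεe)
    have hVle := h2 ε hε0 hεe
    have hlogV : Real.log (V ε) ≤ Real.log A + (Real.log ε + Real.log (1 + Real.log ε⁻¹)) := by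
      calc Real.log (V ε) ≤ Real.log (A * (ε * (1 + Real.log ε⁻¹))) := Real.log_le_log hVpos hVle
        _ = Real.log A + (Real.log ε + Real.log (1 + Real.log ε⁻¹)) := by
            rw [Real.log_mul (by positivity) (by positivity),
              Real.log_mul (ne_of_gt hε0) (by positivity)]
    have hdiv : (Real.log A + (Real.log ε + Real.log (1 + Real.log ε⁻¹))) / Real.log ε
        ≤ Real.log (V ε) / Real.log ε :=
      (div_le_div_right_of_neg hlogneg).mpr hlogV
    calc Real.log A * (Real.log ε)⁻¹ + 1 + Real.log (1 + Real.log ε⁻¹) / Real.log ε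
        = (Real.log A + (Real.log ε + Real.log (1 + Real.log ε⁻¹))) / Real.log ε := by
          field_simp; ring
      _ ≤ Real.log (V ε) / Real.log ε := hdiv
  · filter_upwards [hεsmall] with ε hε
    obtain ⟨hε0, hεe⟩ := hε
    have hlog := key ε ⟨hε0, hεe⟩
    have hlogneg : Real.log ε < 0 := by linarith
    have hVpos : 0 < V ε := lt_of_lt_of_le (by positivity) (h1 ε hε0 hεe)
    have hlogV : Real.log c + Real.log ε ≤ Real.log (V ε) := by
      rw [← Real.log_mul (ne_of_gt hc) (ne_of_gt hε0)]
      exact Real.log_le_log (by positivity) (h1 ε hε0 hεe)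
    have : Real.log (V ε) / Real.log ε ≤ (Real.log c + Real.log ε) / Real.log ε :=
      (div_le_div_right_of_neg hlogneg).mpr hlogV
    calc Real.log (V ε) / Real.log ε ≤ (Real.log c + Real.log ε) / Real.log ε := this
      _ = Real.log c * (Real.log ε)⁻¹ + 1 := by
          rw [add_div, div_self (ne_of_lt hlogneg), div_eq_mul_inv]


lemma aux_deriv (f f' : ℝ → ℝ) (φ : ℝ) (hf : HasDerivAt f (f' φ) φ) :
    HasDerivAt (fun φ => (![f φ * Real.cos φ, f φ * Real.sin φ] : Fin 2 → ℝ))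
      (![f' φ * Real.cos φ - f φ * Real.sin φ, f' φ * Real.sin φ + f φ * Real.cos φ]) φ := by
  rw [hasDerivAt_pi]
  intro i
  fin_cases i
  · refine (hf.mul (Real.hasDerivAt_cos φ)).congr_deriv ?_
    simp
    ring
  · refine (hf.mul (Real.hasDerivAt_sin φ)).congr_deriv ?_
    simp

lemma aux_norm_le (a b C : ℝ) (hC : 0 ≤ C) (ha : |a| ≤ C) (hb : |b| ≤ C) :
    ‖(![a, b] : Fin 2 → ℝ)‖ ≤ C := by
  rw [pi_norm_le_iff_of_nonneg hC]
  intro i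
  fin_cases i <;> simpa [Real.norm_eq_abs]

set_option maxHeartbeats 1000000 in
lemma aux_upper (φ₁ : ℝ) (hφ₁ : 1 < φ₁) (f f' : ℝ → ℝ)
    (hderiv : ∀ φ ≥ φ₁, HasDerivAt f (f' φ) φ)
    (m K : ℝ) (hm : 0 < m) (hK : 0 < K)
    (hbd : ∀ φ ≥ φ₁, 0 < f φ ∧ f φ ≤ m * φ⁻¹)
    (hder_bd : ∀ φ ≥ φ₁, -K * φ⁻¹ ≤ f' φ ∧ f' φ ≤ 0)
    (ε : ℝ) (hε0 : 0 < ε) (hε1 : ε ≤ Real.exp (-1)) (hε2 : ε ≤ φ₁⁻¹ ^ 2) :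
    volume (cthickening ε
        ((fun φ => (![f φ * Real.cos φ, f φ * Real.sin φ] : Fin 2 → ℝ)) '' Ici φ₁))
      ≤ ENNReal.ofReal ((36*(K+m) + 36 + 4*(m+2)^2) * (ε * (1 + Real.log ε⁻¹))) := by
  have hφ₁0 : (0:ℝ) < φ₁ := by linarith
  set P : ℝ → (Fin 2 → ℝ) := fun φ => ![f φ * Real.cos φ, f φ * Real.sin φ] with hPdef
  set Q : ℝ → (Fin 2 → ℝ) := fun t => P (Real.exp t) with hQdef
  have hε1' : ε ≤ 1 := hε1.trans (by
    have := Real.exp_le_one_iff.mpr (by norm_num : (-1:ℝ) ≤ 0); linarith)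
  -- the cut point
  set T : ℝ := Real.sqrt ε⁻¹ with hTdef
  have hεinv : (0:ℝ) < ε⁻¹ := by positivity
  have hT0 : 0 < T := Real.sqrt_pos.mpr hεinv
  have hTφ₁ : φ₁ ≤ T := by
    have h1 : φ₁ ^ 2 ≤ ε⁻¹ := by
      rw [← inv_inv (φ₁ ^ 2)]
      apply inv_anti₀ hε0
      calc ε ≤ φ₁⁻¹ ^ 2 := hε2
        _ = (φ₁ ^ 2)⁻¹ := by rw [inv_pow]
    calc φ₁ = Real.sqrt (φ₁ ^ 2) := by rw [Real.sqrt_sq hφ₁0.le]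
      _ ≤ T := Real.sqrt_le_sqrt h1
  have hsqrt_inv : T⁻¹ = Real.sqrt ε := by
    rw [hTdef, ← Real.sqrt_inv, inv_inv]
  -- pointwise norm bound on P
  have hfbd : ∀ φ ≥ φ₁, |f φ| ≤ m * φ⁻¹ := by
    intro φ hφ
    rw [abs_of_pos (hbd φ hφ).1]
    exact (hbd φ hφ).2
  have hnormP : ∀ φ ≥ φ₁, ‖P φ‖ ≤ m * φ⁻¹ := by
    intro φ hφ
    have hφ0 : (0:ℝ) < φ := lt_of_lt_of_le hφ₁0 hφ
    have h1 : (0:ℝ) ≤ m * φ⁻¹ := by positivity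
    apply aux_norm_le _ _ _ h1
    · rw [abs_mul]
      calc |f φ| * |Real.cos φ| ≤ (m * φ⁻¹) * 1 :=
        mul_le_mul (hfbd φ hφ) (Real.abs_cos_le_one φ) (abs_nonneg _) h1
      _ = m * φ⁻¹ := by ring
    · rw [abs_mul]
      calc |f φ| * |Real.sin φ| ≤ (m * φ⁻¹) * 1 :=
        mul_le_mul (hfbd φ hφ) (Real.abs_sin_le_one φ) (abs_nonneg _) h1
      _ = m * φ⁻¹ := by ring
  -- Lipschitz bound for Q on Ici (log φ₁)
  have hexp_ge : ∀ t ∈ Ici (Real.log φ₁), φ₁ ≤ Real.exp t := by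
    intro t ht
    calc φ₁ = Real.exp (Real.log φ₁) := (Real.exp_log hφ₁0).symm
      _ ≤ Real.exp t := Real.exp_le_exp.mpr ht
  have hQlip : ∀ s ∈ Ici (Real.log φ₁), ∀ t ∈ Ici (Real.log φ₁),
      ‖Q t - Q s‖ ≤ (K + m) * ‖t - s‖ := by
    have hQderiv : ∀ t ∈ Ici (Real.log φ₁),
        HasDerivWithinAt Q (Real.exp t •
          (![f' (Real.exp t) * Real.cos (Real.exp t) - f (Real.exp t) * Real.sin (Real.exp t),
             f' (Real.exp t) * Real.sin (Real.exp t) + f (Real.exp t) * Real.cos (Real.exp t)]))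
          (Ici (Real.log φ₁)) t := by
      intro t ht
      have h1 := aux_deriv f f' (Real.exp t) (hderiv _ (hexp_ge t ht))
      exact ((h1.scomp t (Real.hasDerivAt_exp t)) : HasDerivAt (fun t => P (Real.exp t)) _ t).hasDerivWithinAt
    have hQbd : ∀ t ∈ Ici (Real.log φ₁),
        ‖Real.exp t •
          (![f' (Real.exp t) * Real.cos (Real.exp t) - f (Real.exp t) * Real.sin (Real.exp t),
             f' (Real.exp t) * Real.sin (Real.exp t) + f (Real.exp t) * Real.cos (Real.exp t)] : Fin 2 → ℝ)‖
          ≤ K + m := by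
      intro t ht
      set φ := Real.exp t with hφdef
      have hφ : φ₁ ≤ φ := hexp_ge t ht
      have hφ0 : (0:ℝ) < φ := lt_of_lt_of_le hφ₁0 hφ
      have hf'bd : |f' φ| ≤ K * φ⁻¹ := by
        rw [abs_le]
        constructor
        · have := (hder_bd φ hφ).1; linarith [this]
        · have h2 := (hder_bd φ hφ).2
          have : (0:ℝ) ≤ K * φ⁻¹ := by positivity
          linarith
      have hDbd : ‖(![f' φ * Real.cos φ - f φ * Real.sin φ,
          f' φ * Real.sin φ + f φ * Real.cos φ] : Fin 2 → ℝ)‖ ≤ (K + m) * φ⁻¹ := by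
        apply aux_norm_le _ _ _ (by positivity)
        · calc |f' φ * Real.cos φ - f φ * Real.sin φ|
              ≤ |f' φ * Real.cos φ| + |f φ * Real.sin φ| := abs_sub _ _
            _ ≤ K * φ⁻¹ + m * φ⁻¹ := by
                apply add_le_add
                · rw [abs_mul]
                  calc |f' φ| * |Real.cos φ| ≤ (K * φ⁻¹) * 1 :=
                      mul_le_mul hf'bd (Real.abs_cos_le_one φ) (abs_nonneg _) (by positivity)
                    _ = K * φ⁻¹ := by ring
                · rw [abs_mul]
                  calc |f φ| * |Real.sin φ| ≤ (m * φ⁻¹) * 1 :=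
                      mul_le_mul (hfbd φ hφ) (Real.abs_sin_le_one φ) (abs_nonneg _) (by positivity)
                    _ = m * φ⁻¹ := by ring
            _ = (K + m) * φ⁻¹ := by ring
        · calc |f' φ * Real.sin φ + f φ * Real.cos φ|
              ≤ |f' φ * Real.sin φ| + |f φ * Real.cos φ| := abs_add_le _ _
            _ ≤ K * φ⁻¹ + m * φ⁻¹ := by
                apply add_le_add
                · rw [abs_mul]
                  calc |f' φ| * |Real.sin φ| ≤ (K * φ⁻¹) * 1 :=
                      mul_le_mul hf'bd (Real.abs_sin_le_one φ) (abs_nonneg _) (by positivity)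
                    _ = K * φ⁻¹ := by ring
                · rw [abs_mul]
                  calc |f φ| * |Real.cos φ| ≤ (m * φ⁻¹) * 1 :=
                      mul_le_mul (hfbd φ hφ) (Real.abs_cos_le_one φ) (abs_nonneg _) (by positivity)
                    _ = m * φ⁻¹ := by ring
            _ = (K + m) * φ⁻¹ := by ring
      calc ‖φ • (![f' φ * Real.cos φ - f φ * Real.sin φ,
              f' φ * Real.sin φ + f φ * Real.cos φ] : Fin 2 → ℝ)‖
          = |φ| * ‖(![f' φ * Real.cos φ - f φ * Real.sin φ,
              f' φ * Real.sin φ + f φ * Real.cos φ] : Fin 2 → ℝ)‖ := by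
            rw [norm_smul, Real.norm_eq_abs]
        _ ≤ φ * ((K + m) * φ⁻¹) := by
            rw [abs_of_pos hφ0]
            exact mul_le_mul_of_nonneg_left hDbd hφ0.le
        _ = K + m := by field_simp
    intro s hs t ht
    exact Convex.norm_image_sub_le_of_norm_hasDerivWithin_le hQderiv hQbd (convex_Ici _) hs ht
  -- covering
  set hstep : ℝ := ε / (K + m) with hhdef
  have hKm : (0:ℝ) < K + m := by linarith
  have hh0 : 0 < hstep := div_pos hε0 hKm
  have hlogT : Real.log φ₁ ≤ Real.log T := Real.log_le_log hφ₁0 hTφ₁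
  set N : ℕ := ⌊(Real.log T - Real.log φ₁) / hstep⌋₊ with hNdef
  set q : ℕ → (Fin 2 → ℝ) := fun i => Q (Real.log φ₁ + i * hstep) with hqdef
  have hcover : cthickening ε (P '' Ici φ₁) ⊆
      (⋃ i ∈ Finset.range (N+1), closedBall (q i) (3*ε)) ∪
        closedBall 0 (m * Real.sqrt ε + 2*ε) := by
    have hsplit : Ici φ₁ = Icc φ₁ T ∪ Ici T := (Icc_union_Ici_eq_Ici hTφ₁).symm
    rw [hsplit, image_union, cthickening_union]
    apply union_subset_union
    · intro z hz
      have hz2 := cthickening_subset_iUnion_closedBall_of_lt (P '' Icc φ₁ T)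
        (by linarith : (0:ℝ) < 2*ε) (by linarith : ε < 2*ε) hz
      rw [mem_iUnion₂] at hz2
      obtain ⟨y, ⟨φ, hφmem, rfl⟩, hzy⟩ := hz2
      obtain ⟨hφl, hφr⟩ := hφmem
      have hφ0 : (0:ℝ) < φ := lt_of_lt_of_le hφ₁0 hφl
      set t : ℝ := Real.log φ with htdef
      have ht1 : Real.log φ₁ ≤ t := Real.log_le_log hφ₁0 hφl
      have ht2 : t ≤ Real.log T := Real.log_le_log hφ0 hφr
      set i : ℕ := ⌊(t - Real.log φ₁) / hstep⌋₊ with hidef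
      have hiN : i ≤ N := Nat.floor_le_floor ((div_le_div_iff_of_pos_right hh0).mpr (by linarith))
      have hile : (i:ℝ) * hstep ≤ t - Real.log φ₁ := by
        have h0' : (0:ℝ) ≤ (t - Real.log φ₁) / hstep := div_nonneg (by linarith) hh0.le
        have := Nat.floor_le h0'
        calc (i:ℝ) * hstep ≤ ((t - Real.log φ₁) / hstep) * hstep := by
              exact mul_le_mul_of_nonneg_right this hh0.le
          _ = t - Real.log φ₁ := by field_simp
      have hilt : t - Real.log φ₁ < ((i:ℝ)+1) * hstep := by
        have := Nat.lt_floor_add_one ((t - Real.log φ₁) / hstep)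
        calc t - Real.log φ₁ = ((t - Real.log φ₁) / hstep) * hstep := by field_simp
          _ < ((i:ℝ)+1) * hstep := by
              apply mul_lt_mul_of_pos_right _ hh0
              exact_mod_cast this
      have hmemt : t ∈ Ici (Real.log φ₁) := ht1
      have hmemti : Real.log φ₁ + (i:ℝ) * hstep ∈ Ici (Real.log φ₁) := by
        simp only [mem_Ici, le_add_iff_nonneg_right]
        positivity
      have hPQt : P φ = Q t := by
        rw [hQdef]
        simp only [htdef, Real.exp_log hφ0]
      have hdist : dist (P φ) (q i) ≤ ε := by
        rw [hPQt, hqdef]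
        rw [dist_eq_norm]
        calc ‖Q t - Q (Real.log φ₁ + (i:ℝ) * hstep)‖
            ≤ (K + m) * ‖t - (Real.log φ₁ + (i:ℝ) * hstep)‖ :=
              hQlip _ hmemti _ hmemt
          _ ≤ (K + m) * hstep := by
              apply mul_le_mul_of_nonneg_left _ hKm.le
              rw [Real.norm_eq_abs, abs_le]
              constructor <;> nlinarith [hile, hilt, hh0.le]
          _ = ε := by rw [hhdef]; field_simp
      rw [mem_iUnion₂]
      refine ⟨i, ?_, ?_⟩
      · simp only [Finset.mem_range]; omega
      · rw [mem_closedBall]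
        calc dist z (q i) ≤ dist z (P φ) + dist (P φ) (q i) := dist_triangle _ _ _
          _ ≤ 2*ε + ε := add_le_add (mem_closedBall.mp hzy) hdist
          _ = 3*ε := by ring
    · intro z hz
      have hz2 := cthickening_subset_iUnion_closedBall_of_lt (P '' Ici T)
        (by linarith : (0:ℝ) < 2*ε) (by linarith : ε < 2*ε) hz
      rw [mem_iUnion₂] at hz2
      obtain ⟨y, ⟨φ, hφmem, rfl⟩, hzy⟩ := hz2
      have hφT : T ≤ φ := hφmem
      have hφφ₁ : φ₁ ≤ φ := hTφ₁.trans hφT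
      have hφ0 : (0:ℝ) < φ := lt_of_lt_of_le hφ₁0 hφφ₁
      have hPnorm : ‖P φ‖ ≤ m * Real.sqrt ε := by
        calc ‖P φ‖ ≤ m * φ⁻¹ := hnormP φ hφφ₁
          _ ≤ m * T⁻¹ := by
              apply mul_le_mul_of_nonneg_left _ hm.le
              exact inv_anti₀ hT0 hφT
          _ = m * Real.sqrt ε := by rw [hsqrt_inv]
      rw [mem_closedBall]
      calc dist z 0 ≤ dist z (P φ) + dist (P φ) 0 := dist_triangle _ _ _
        _ ≤ 2*ε + m * Real.sqrt ε := by
            apply add_le_add (mem_closedBall.mp hzy)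
            rw [dist_zero_right]
            exact hPnorm
        _ = m * Real.sqrt ε + 2*ε := by ring
  -- measure computation
  have hmeas1 : volume (⋃ i ∈ Finset.range (N+1), closedBall (q i) (3*ε))
      ≤ (N+1 : ℕ) * ENNReal.ofReal ((2*(3*ε))^2) := by
    calc volume (⋃ i ∈ Finset.range (N+1), closedBall (q i) (3*ε))
        ≤ ∑ i ∈ Finset.range (N+1), volume (closedBall (q i) (3*ε)) :=
          measure_biUnion_finset_le _ _
      _ = ∑ _i ∈ Finset.range (N+1), ENNReal.ofReal ((2*(3*ε))^2) := by
          apply Finset.sum_congr rfl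
          intro i _
          rw [Real.volume_pi_closedBall _ (by linarith : (0:ℝ) ≤ 3*ε)]
          norm_num
      _ = (N+1 : ℕ) * ENNReal.ofReal ((2*(3*ε))^2) := by
          rw [Finset.sum_const, Finset.card_range, nsmul_eq_mul]
  have hmeas2 : volume (closedBall (0 : Fin 2 → ℝ) (m * Real.sqrt ε + 2*ε))
      = ENNReal.ofReal ((2*(m * Real.sqrt ε + 2*ε))^2) := by
    rw [Real.volume_pi_closedBall _ (by positivity : (0:ℝ) ≤ m * Real.sqrt ε + 2*ε)]
    norm_num
  -- real arithmetic
  set u : ℝ := Real.log ε⁻¹ with hudef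
  have hu1 : 1 ≤ u := by
    rw [hudef, Real.log_inv]
    have : Real.log ε ≤ Real.log (Real.exp (-1)) := Real.log_le_log hε0 hε1
    rw [Real.log_exp] at this
    linarith
  set su : ℝ := Real.sqrt ε with hsudef
  have hsu2 : su^2 = ε := Real.sq_sqrt hε0.le
  have hsu0 : 0 ≤ su := Real.sqrt_nonneg _
  have hsu1 : su ≤ 1 := by
    rw [hsudef, show (1:ℝ) = Real.sqrt 1 by rw [Real.sqrt_one]]
    exact Real.sqrt_le_sqrt hε1'
  have hεsu : ε ≤ su := by nlinarith
  have hNle : (N:ℝ) ≤ (K+m) * u / (2*ε) := by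
    have h0' : (0:ℝ) ≤ (Real.log T - Real.log φ₁) / hstep := div_nonneg (by linarith) hh0.le
    have h1 : (N:ℝ) ≤ (Real.log T - Real.log φ₁) / hstep := Nat.floor_le h0'
    have h2 : Real.log T = u / 2 := by
      rw [hTdef, Real.log_sqrt hεinv.le, hudef]
    have h3 : 0 ≤ Real.log φ₁ := Real.log_nonneg hφ₁.le
    calc (N:ℝ) ≤ (Real.log T - Real.log φ₁) / hstep := h1
      _ = (Real.log T - Real.log φ₁) * (K+m) / ε := by
          rw [hhdef]; field_simp
      _ ≤ (u/2) * (K+m) / ε := by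
          have h4 : Real.log T - Real.log φ₁ ≤ u/2 := by rw [h2] at *; linarith
          gcongr
      _ = (K+m) * u / (2*ε) := by ring
  have hreal : ((N:ℝ)+1) * (2*(3*ε))^2 + (2*(m*su+2*ε))^2
      ≤ (36*(K+m) + 36 + 4*(m+2)^2) * (ε * (1 + u)) := by
    have e1 : ((N:ℝ)+1) * (2*(3*ε))^2 ≤ 36*(K+m)*(ε*u) + 36*ε := by
      have h4 : ((N:ℝ)+1) * (2*(3*ε))^2 = ((N:ℝ)+1) * (36*ε^2) := by ring
      have h5 : ((N:ℝ)+1) * (36*ε^2) ≤ ((K+m)*u/(2*ε)+1) * (36*ε^2) := by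
        apply mul_le_mul_of_nonneg_right (by linarith) (by positivity)
      have h6 : ((K+m)*u/(2*ε)+1) * (36*ε^2) = 18*(K+m)*u*ε + 36*ε^2 := by
        field_simp; ring
      nlinarith [mul_pos hKm (lt_of_lt_of_le one_pos hu1), sq_nonneg ε,
        mul_le_mul_of_nonneg_left hε1' (le_of_lt hε0)]
    have e2 : (2*(m*su+2*ε))^2 ≤ 4*(m+2)^2*ε := by
      have h1 : m*su+2*ε ≤ (m+2)*su := by nlinarith
      have h0 : 0 ≤ m*su+2*ε := by positivity
      calc (2*(m*su+2*ε))^2 ≤ (2*((m+2)*su))^2 := by nlinarith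
        _ = 4*(m+2)^2*ε := by rw [← hsu2]; ring
    nlinarith [mul_nonneg (mul_nonneg hm.le hε0.le) (by linarith : (0:ℝ) ≤ u),
      mul_nonneg hε0.le (by linarith : (0:ℝ) ≤ u), mul_pos hKm hε0,
      mul_nonneg (mul_nonneg (by positivity : (0:ℝ) ≤ (m+2)^2) hε0.le) (by linarith : (0:ℝ) ≤ u)]
  -- assemble
  calc volume (cthickening ε (P '' Ici φ₁))
      ≤ volume ((⋃ i ∈ Finset.range (N+1), closedBall (q i) (3*ε)) ∪
          closedBall 0 (m * Real.sqrt ε + 2*ε)) := measure_mono hcover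
    _ ≤ volume (⋃ i ∈ Finset.range (N+1), closedBall (q i) (3*ε)) +
        volume (closedBall (0 : Fin 2 → ℝ) (m * Real.sqrt ε + 2*ε)) := measure_union_le _ _
    _ ≤ (N+1 : ℕ) * ENNReal.ofReal ((2*(3*ε))^2) + ENNReal.ofReal ((2*(m*su+2*ε))^2) := by
        rw [hmeas2]
        exact add_le_add hmeas1 (le_refl _)
    _ = ENNReal.ofReal (((N:ℝ)+1) * (2*(3*ε))^2 + (2*(m*su+2*ε))^2) := by
        rw [ENNReal.ofReal_add (by positivity) (by positivity)]
        congr 1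
        rw [← ENNReal.ofReal_natCast (N+1), ← ENNReal.ofReal_mul (by positivity)]
        congr 1
        push_cast
        ring
    _ ≤ ENNReal.ofReal ((36*(K+m) + 36 + 4*(m+2)^2) * (ε * (1 + u))) :=
        ENNReal.ofReal_le_ofReal hreal


lemma aux_lower (φ₁ : ℝ) (hφ₁ : 1 < φ₁) (f f' : ℝ → ℝ)
    (hderiv : ∀ φ ≥ φ₁, HasDerivAt f (f' φ) φ)
    (m K : ℝ) (hm : 0 < m) (hK : 0 < K)
    (hbd : ∀ φ ≥ φ₁, 0 < f φ ∧ f φ ≤ m * φ⁻¹)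
    (hder_bd : ∀ φ ≥ φ₁, -K * φ⁻¹ ≤ f' φ ∧ f' φ ≤ 0)
    (ε : ℝ) (hε0 : 0 < ε) :
    ENNReal.ofReal (f (φ₁ + 3*π) * ε) ≤ volume (cthickening ε
        ((fun φ => (![f φ * Real.cos φ, f φ * Real.sin φ] : Fin 2 → ℝ)) '' Ici φ₁)) := by
  have hπ := Real.pi_pos
  have hφ₁0 : (0:ℝ) < φ₁ := by linarith
  set P : ℝ → (Fin 2 → ℝ) := fun φ => ![f φ * Real.cos φ, f φ * Real.sin φ] with hPdef
  -- f is antitone on [φ₁, ∞)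
  have hcont : ContinuousOn f (Ici φ₁) := fun x hx =>
    (hderiv x hx).continuousAt.continuousWithinAt
  have hant : AntitoneOn f (Ici φ₁) := by
    apply antitoneOn_of_deriv_nonpos (convex_Ici _) hcont
    · rw [interior_Ici]
      exact fun x hx => ((hderiv x (le_of_lt hx)).differentiableAt).differentiableWithinAt
    · rw [interior_Ici]
      intro x hx
      rw [(hderiv x (le_of_lt hx)).deriv]
      exact (hder_bd x (le_of_lt hx)).2
  -- special angles
  set k : ℤ := ⌈φ₁ / (2*π)⌉ with hkdef
  set φp : ℝ := (k:ℝ) * (2*π) with hφpdef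
  have hφp1 : φ₁ ≤ φp := by
    have h1 : φ₁ / (2*π) ≤ (k:ℝ) := Int.le_ceil _
    calc φ₁ = (φ₁ / (2*π)) * (2*π) := by field_simp
      _ ≤ (k:ℝ) * (2*π) := mul_le_mul_of_nonneg_right h1 (by linarith)
  have hφp2 : φp ≤ φ₁ + 2*π := by
    have h1 : (k:ℝ) < φ₁ / (2*π) + 1 := Int.ceil_lt_add_one _
    calc φp = (k:ℝ) * (2*π) := rfl
      _ ≤ (φ₁/(2*π) + 1) * (2*π) := by nlinarith
      _ = φ₁ + 2*π := by field_simp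
  set φm : ℝ := φp + π with hφmdef
  have hφm2 : φm ≤ φ₁ + 3*π := by rw [hφmdef]; linarith
  have hcosp : Real.cos φp = 1 := Real.cos_int_mul_two_pi k
  have hcosm : Real.cos φm = -1 := by
    rw [hφmdef, Real.cos_add_pi, hcosp]
  set δ : ℝ := f (φ₁ + 3*π) with hδdef
  have hδ0 : 0 < δ := (hbd _ (by linarith)).1
  have hfp : δ ≤ f φp := hant (mem_Ici.mpr hφp1) (mem_Ici.mpr (by linarith)) (by linarith)
  have hfm : δ ≤ f φm := hant (mem_Ici.mpr (by linarith [hφp1])) (mem_Ici.mpr (by linarith)) hφm2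
  -- IVT for x-coordinate
  set g : ℝ → ℝ := fun φ => f φ * Real.cos φ with hgdef
  have hgc : ContinuousOn g (Icc φp φm) := by
    apply ContinuousOn.mul
    · exact hcont.mono (fun x hx => le_trans hφp1 hx.1)
    · exact Real.continuous_cos.continuousOn
  have hIVT : Icc (g φm) (g φp) ⊆ g '' Icc φp φm :=
    intermediate_value_Icc' (by linarith) hgc
  have hgφm : g φm = -f φm := by rw [hgdef]; simp [hcosm]
  have hgφp : g φp = f φp := by rw [hgdef]; simp [hcosp]
  -- the sample points
  set M : ℕ := ⌊δ / (3*ε)⌋₊ with hMdef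
  have hM1 : (M:ℝ) * (3*ε) ≤ δ := by
    have := Nat.floor_le (by positivity : (0:ℝ) ≤ δ / (3*ε))
    calc (M:ℝ) * (3*ε) ≤ (δ/(3*ε)) * (3*ε) := mul_le_mul_of_nonneg_right this (by linarith)
      _ = δ := by field_simp
  have hM2 : δ < ((M:ℝ)+1) * (3*ε) := by
    have := Nat.lt_succ_floor (δ / (3*ε))
    have h2 : δ/(3*ε) < (M:ℝ)+1 := by exact_mod_cast this
    calc δ = (δ/(3*ε)) * (3*ε) := by field_simp
      _ < ((M:ℝ)+1) * (3*ε) := mul_lt_mul_of_pos_right h2 (by linarith)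
  set c : ℕ → ℝ := fun i => -δ + 3*ε*i with hcdef
  have hex : ∀ i : ℕ, i ≤ M → ∃ φ, φ ∈ Icc φp φm ∧ g φ = c i := by
    intro i hi
    have hci : c i ∈ Icc (g φm) (g φp) := by
      rw [hgφm, hgφp, hcdef]
      constructor
      · simp only
        have : (0:ℝ) ≤ 3*ε*i := by positivity
        linarith
      · simp only
        have h3 : (i:ℝ) * (3*ε) ≤ (M:ℝ) * (3*ε) :=
          mul_le_mul_of_nonneg_right (by exact_mod_cast hi) (by linarith)
        nlinarith
    obtain ⟨φ, hφ, hgφ⟩ := hIVT hci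
    exact ⟨φ, hφ, hgφ⟩
  choose! φs hφsmem hφsval using hex
  set p : ℕ → (Fin 2 → ℝ) := fun i => P (φs i) with hpdef
  -- the balls are in the thickening
  have hsub : (⋃ i ∈ Finset.range (M+1), ball (p i) ε) ⊆
      cthickening ε (P '' Ici φ₁) := by
    apply iUnion₂_subset
    intro i hi
    rw [Finset.mem_range] at hi
    have hmem : p i ∈ P '' Ici φ₁ :=
      ⟨φs i, mem_Ici.mpr (le_trans hφp1 (hφsmem i (by omega)).1), rfl⟩
    exact (ball_subset_closedBall).trans (closedBall_subset_cthickening hmem ε)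
  -- coordinates of centers
  have hcoord : ∀ i ≤ M, p i 0 = c i := by
    intro i hi
    have := hφsval i hi
    rw [hpdef]
    simpa [hPdef, hgdef] using this
  -- disjointness
  have hdisj : (↑(Finset.range (M+1)) : Set ℕ).PairwiseDisjoint
      (fun i => ball (p i) ε) := by
    intro i hi j hj hij
    rw [Finset.coe_range, mem_Iio] at hi hj
    apply ball_disjoint_ball
    have hz : (1:ℤ) ≤ |(i:ℤ) - (j:ℤ)| :=
      Int.one_le_abs (sub_ne_zero.mpr (by exact_mod_cast hij))
    have h1 : (1:ℝ) ≤ |(i:ℝ) - (j:ℝ)| := by exact_mod_cast hz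
    have h2 : 3*ε ≤ |c i - c j| := by
      have he : c i - c j = (3*ε) * ((i:ℝ) - (j:ℝ)) := by simp only [hcdef]; ring
      rw [he, abs_mul, abs_of_pos (by linarith : (0:ℝ) < 3*ε)]
      nlinarith
    have h3 : dist (p i 0) (p j 0) ≤ dist (p i) (p j) := dist_le_pi_dist _ _ 0
    rw [Real.dist_eq, hcoord i (by omega), hcoord j (by omega)] at h3
    linarith
  -- volume computation
  have hvol : volume (⋃ i ∈ Finset.range (M+1), ball (p i) ε)
      = (M+1 : ℕ) * ENNReal.ofReal ((2*ε)^2) := by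
    rw [measure_biUnion_finset hdisj (fun i _ => measurableSet_ball)]
    have : ∀ i ∈ Finset.range (M+1), volume (ball (p i) ε) = ENNReal.ofReal ((2*ε)^2) := by
      intro i _
      rw [Real.volume_pi_ball _ hε0]
      norm_num
    rw [Finset.sum_congr rfl this, Finset.sum_const, Finset.card_range, nsmul_eq_mul]
  calc ENNReal.ofReal (δ * ε) ≤ ENNReal.ofReal (((M:ℝ)+1) * (2*ε)^2) := by
        apply ENNReal.ofReal_le_ofReal
        nlinarith
    _ = (M+1 : ℕ) * ENNReal.ofReal ((2*ε)^2) := by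
        rw [← ENNReal.ofReal_natCast (M+1), ← ENNReal.ofReal_mul (by positivity)]
        congr 2
        push_cast
        ring
    _ = volume (⋃ i ∈ Finset.range (M+1), ball (p i) ε) := hvol.symm
    _ ≤ volume (cthickening ε (P '' Ici φ₁)) := measure_mono hsub

lemma aux_dist (x y : EuclideanSpace ℝ (Fin 2)) :
    dist (WithLp.ofLp x) (WithLp.ofLp y) ≤ dist x y ∧
      dist x y ≤ 2 * dist (WithLp.ofLp x) (WithLp.ofLp y) := by
  have h0 : |x 0 - y 0| ≤ dist (WithLp.ofLp x) (WithLp.ofLp y) := by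
    have := dist_le_pi_dist (WithLp.ofLp x) (WithLp.ofLp y) 0
    rwa [Real.dist_eq] at this
  have h1 : |x 1 - y 1| ≤ dist (WithLp.ofLp x) (WithLp.ofLp y) := by
    have := dist_le_pi_dist (WithLp.ofLp x) (WithLp.ofLp y) 1
    rwa [Real.dist_eq] at this
  rw [EuclideanSpace.dist_eq, Fin.sum_univ_two, Real.dist_eq, Real.dist_eq, sq_abs, sq_abs]
  constructor
  · refine (dist_pi_le_iff (Real.sqrt_nonneg _)).mpr (Fin.forall_fin_two.mpr ⟨?_, ?_⟩)
    · rw [Real.dist_eq]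
      exact Real.abs_le_sqrt (by nlinarith [sq_nonneg (x 1 - y 1)])
    · rw [Real.dist_eq]
      exact Real.abs_le_sqrt (by nlinarith [sq_nonneg (x 0 - y 0)])
  · have hd : 0 ≤ dist (WithLp.ofLp x) (WithLp.ofLp y) := dist_nonneg
    rw [Real.sqrt_le_left (by positivity)]
    have a0 := pow_le_pow_left₀ (abs_nonneg _) h0 2
    have a1 := pow_le_pow_left₀ (abs_nonneg _) h1 2
    rw [sq_abs] at a0 a1
    nlinarith

theorem stmt_10 (φ₁ : ℝ) (hφ₁ : 1 < φ₁) (f f' : ℝ → ℝ)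
    (hderiv : ∀ φ ≥ φ₁, HasDerivAt f (f' φ) φ)
    (hf' : ContinuousOn f' (Ici φ₁))
    (hlim : Tendsto f atTop (nhds 0))
    (m K : ℝ) (hm : 0 < m) (hK : 0 < K)
    (hbd : ∀ φ ≥ φ₁, 0 < f φ ∧ f φ ≤ m * φ⁻¹)
    (hder_bd : ∀ φ ≥ φ₁, -K * φ⁻¹ ≤ f' φ ∧ f' φ ≤ 0)
    (hnz : ∀ φ ≥ φ₁, ∃ ψ ∈ Ico φ (φ + 2 * π), f' ψ ≠ 0) :
    Tendsto (fun ε : ℝ =>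
        Real.log (volume (cthickening ε
          ((fun φ => (WithLp.toLp 2 ![f φ * Real.cos φ, f φ * Real.sin φ] : EuclideanSpace ℝ (Fin 2))) ''
            Ici φ₁))).toReal / Real.log ε)
      (nhdsWithin 0 (Ioi 0)) (nhds 1) := by
  have hπ := Real.pi_pos
  have hφ₁0 : (0:ℝ) < φ₁ := by linarith
  have hc0 : 0 < f (φ₁ + 3*π) := (hbd _ (by linarith)).1
  have hA1 : (1:ℝ) ≤ 36*(K+m) + 36 + 4*(m+2)^2 := by nlinarith [sq_nonneg (m+2)]
  have hε₀0 : 0 < min (Real.exp (-1)) (φ₁⁻¹^2) := lt_min (Real.exp_pos _) (by positivity)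
  have hfin : ∀ ε : ℝ, volume (cthickening ε
      ((fun φ => (![f φ * Real.cos φ, f φ * Real.sin φ] : Fin 2 → ℝ)) '' Ici φ₁)) ≠ ⊤ := by
    intro ε
    have hbdd : Bornology.IsBounded
        ((fun φ => (![f φ * Real.cos φ, f φ * Real.sin φ] : Fin 2 → ℝ)) '' Ici φ₁) := by
      apply Bornology.IsBounded.subset (isBounded_closedBall (x := (0 : Fin 2 → ℝ)) (r := m))
      rintro x ⟨φ, hφ, rfl⟩
      rw [mem_closedBall, dist_zero_right]
      have hφ0 : (0:ℝ) < φ := lt_of_lt_of_le hφ₁0 hφ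
      have hφinv : φ⁻¹ ≤ 1 := inv_le_one_of_one_le₀ (by have := mem_Ici.mp hφ; linarith)
      have h1 : |f φ| ≤ m := by
        rw [abs_of_pos (hbd φ hφ).1]
        calc f φ ≤ m * φ⁻¹ := (hbd φ hφ).2
          _ ≤ m * 1 := mul_le_mul_of_nonneg_left hφinv hm.le
          _ = m := mul_one m
      apply aux_norm_le _ _ _ hm.le
      · rw [abs_mul]
        calc |f φ| * |Real.cos φ| ≤ m * 1 :=
            mul_le_mul h1 (Real.abs_cos_le_one φ) (abs_nonneg _) hm.le
          _ = m := mul_one m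
      · rw [abs_mul]
        calc |f φ| * |Real.sin φ| ≤ m * 1 :=
            mul_le_mul h1 (Real.abs_sin_le_one φ) (abs_nonneg _) hm.le
          _ = m := mul_one m
    obtain ⟨R, hR⟩ := (hbdd.cthickening (δ := ε)).subset_closedBall (0 : Fin 2 → ℝ)
    exact ne_top_of_le_ne_top (IsCompact.measure_lt_top (isCompact_closedBall _ _)).ne
      (measure_mono hR)
  have hpres := PiLp.volume_preserving_ofLp (Fin 2)
  have hupvol : ∀ ε : ℝ, 0 < ε → volume (cthickening ε
      ((fun φ => (WithLp.toLp 2 ![f φ * Real.cos φ, f φ * Real.sin φ] : EuclideanSpace ℝ (Fin 2))) ''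
        Ici φ₁)) ≤ volume (cthickening ε
      ((fun φ => (![f φ * Real.cos φ, f φ * Real.sin φ] : Fin 2 → ℝ)) '' Ici φ₁)) := by
    intro ε hε0
    rw [← hpres.measure_preimage isClosed_cthickening.measurableSet.nullMeasurableSet]
    apply measure_mono
    intro z hz
    rw [cthickening_eq_iInter_thickening hε0.le] at hz
    rw [mem_preimage, cthickening_eq_iInter_thickening hε0.le]
    simp only [mem_iInter] at hz ⊢
    intro r hr
    obtain ⟨y, ⟨φ, hφ, rfl⟩, hy⟩ := mem_thickening_iff.mp (hz r hr)
    have h1 := (aux_dist z (WithLp.toLp 2 ![f φ * Real.cos φ, f φ * Real.sin φ])).1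
    simp only [WithLp.ofLp_toLp] at h1
    exact mem_thickening_iff.mpr ⟨_, ⟨φ, hφ, rfl⟩, lt_of_le_of_lt h1 hy⟩
  have hlowvol : ∀ ε : ℝ, 0 < ε → volume (cthickening (ε/2)
      ((fun φ => (![f φ * Real.cos φ, f φ * Real.sin φ] : Fin 2 → ℝ)) '' Ici φ₁)) ≤
      volume (cthickening ε
      ((fun φ => (WithLp.toLp 2 ![f φ * Real.cos φ, f φ * Real.sin φ] : EuclideanSpace ℝ (Fin 2))) ''
        Ici φ₁)) := by
    intro ε hε0
    rw [← hpres.measure_preimage isClosed_cthickening.measurableSet.nullMeasurableSet]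
    apply measure_mono
    intro z hz
    rw [mem_preimage, cthickening_eq_iInter_thickening (by positivity)] at hz
    rw [cthickening_eq_iInter_thickening hε0.le]
    simp only [mem_iInter] at hz ⊢
    intro r hr
    obtain ⟨y, ⟨φ, hφ, rfl⟩, hy⟩ := mem_thickening_iff.mp (hz (r/2) (by linarith))
    have h1 := (aux_dist z (WithLp.toLp 2 ![f φ * Real.cos φ, f φ * Real.sin φ])).2
    simp only [WithLp.ofLp_toLp] at h1
    exact mem_thickening_iff.mpr ⟨_, ⟨φ, hφ, rfl⟩, by linarith⟩
  have hfin2 : ∀ ε : ℝ, 0 < ε → volume (cthickening ε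
      ((fun φ => (WithLp.toLp 2 ![f φ * Real.cos φ, f φ * Real.sin φ] : EuclideanSpace ℝ (Fin 2))) ''
        Ici φ₁)) ≠ ⊤ := fun ε hε0 => ne_top_of_le_ne_top (hfin ε) (hupvol ε hε0)
  apply aux_squeeze _ (36*(K+m) + 36 + 4*(m+2)^2) (f (φ₁ + 3*π) / 2)
    (min (Real.exp (-1)) (φ₁⁻¹^2)) hA1 (by positivity) hε₀0 (min_le_left _ _)
  · intro ε hε0 hεe
    have h := aux_lower φ₁ hφ₁ f f' hderiv m K hm hK hbd hder_bd (ε/2) (by positivity)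
    have h2 := ENNReal.toReal_mono (hfin (ε/2)) h
    rw [ENNReal.toReal_ofReal (by positivity)] at h2
    have h3 := ENNReal.toReal_mono (hfin2 ε hε0) (hlowvol ε hε0)
    calc f (φ₁ + 3*π) / 2 * ε = f (φ₁ + 3*π) * (ε/2) := by ring
      _ ≤ _ := h2
      _ ≤ _ := h3
  · intro ε hε0 hεe
    have h := aux_upper φ₁ hφ₁ f f' hderiv m K hm hK hbd hder_bd ε hε0
      (hεe.trans (min_le_left _ _)) (hεe.trans (min_le_right _ _))
    have hε1' : ε ≤ 1 := by
      have h1 : Real.exp (-1:ℝ) ≤ 1 := Real.exp_le_one_iff.mpr (by norm_num)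
      have := hεe.trans (min_le_left _ _)
      linarith
    have hlog : 0 ≤ Real.log ε⁻¹ := Real.log_nonneg ((one_le_inv₀ hε0).mpr hε1')
    have hrhs : 0 ≤ (36*(K+m) + 36 + 4*(m+2)^2) * (ε * (1 + Real.log ε⁻¹)) := by
      apply mul_nonneg (by linarith)
      apply mul_nonneg hε0.le
      linarith
    exact (ENNReal.toReal_mono (hfin ε) (hupvol ε hε0)).trans
      (ENNReal.toReal_le_of_le_ofReal hrhs h)
end

section
/- Let h ∈ C¹[t₀,∞) with h(t) > 0 for t ≥ t₀ and suppose ∫_{t₀}^{∞} |2h'(t) + h(t)²| dt < ∞. Then lim_{t→∞} h(t) = 0. -/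
open Set Filter Real MeasureTheory

set_option maxHeartbeats 1000000 in
theorem stmt_13 (t₀ : ℝ) (h h' : ℝ → ℝ)
    (hderiv : ∀ t ≥ t₀, HasDerivAt h (h' t) t)
    (hh' : ContinuousOn h' (Ici t₀))
    (hpos : ∀ t ≥ t₀, 0 < h t)
    (hint : IntegrableOn (fun t => 2 * h' t + (h t) ^ 2) (Ici t₀) volume) :
    Tendsto h atTop (nhds 0) := by
  set g : ℝ → ℝ := fun t => 2 * h' t + (h t) ^ 2 with hg
  have hcont : ContinuousOn h (Ici t₀) := fun t ht =>
    (hderiv t ht).continuousAt.continuousWithinAt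
  have hsq_cont : ContinuousOn (fun t => h t ^ 2) (Ici t₀) := hcont.pow 2
  -- FTC on intervals
  have hFTC : ∀ b ≥ t₀, ∫ t in t₀..b, h' t = h b - h t₀ := by
    intro b hb
    apply intervalIntegral.integral_eq_sub_of_hasDerivAt
    · intro t ht
      rw [uIcc_of_le hb] at ht
      exact hderiv t ht.1
    · exact (hh'.mono (by rw [uIcc_of_le hb]; exact Icc_subset_Ici_self)).intervalIntegrable
  have hint_h' : ∀ b ≥ t₀, IntervalIntegrable h' volume t₀ b := by
    intro b hb
    apply ContinuousOn.intervalIntegrable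
    apply hh'.mono
    rw [uIcc_of_le hb]; exact Icc_subset_Ici_self
  have hint_sq : ∀ b ≥ t₀, IntervalIntegrable (fun t => h t ^ 2) volume t₀ b := by
    intro b hb
    apply ContinuousOn.intervalIntegrable
    apply hsq_cont.mono
    rw [uIcc_of_le hb]; exact Icc_subset_Ici_self
  have hint_g : ∀ b ≥ t₀, IntervalIntegrable g volume t₀ b := by
    intro b hb
    apply ContinuousOn.intervalIntegrable
    apply ContinuousOn.mono ((continuousOn_const.mul hh').add hsq_cont)
    rw [uIcc_of_le hb]; exact Icc_subset_Ici_self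
  have key : ∀ b ≥ t₀, ∫ t in t₀..b, g t = 2 * (h b - h t₀) + ∫ t in t₀..b, h t ^ 2 := by
    intro b hb
    rw [hg]
    rw [intervalIntegral.integral_add (((hint_h' b hb).const_mul 2)) (hint_sq b hb),
      intervalIntegral.integral_const_mul, hFTC b hb]
  -- the absolute integral bound
  have habs : Integrable (fun t => |g t|) (volume.restrict (Ici t₀)) := hint.abs
  set M : ℝ := ∫ t in Ici t₀, |g t|
  have hbound : ∀ b ≥ t₀, (∫ t in t₀..b, |g t|) ≤ M := by
    intro b hb
    rw [intervalIntegral.integral_of_le hb]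
    apply setIntegral_mono_set habs
    · exact Eventually.of_forall fun t => abs_nonneg _
    · exact HasSubset.Subset.eventuallyLE (fun x hx => hx.1.le)
  -- bound on ∫ h²
  have hsq_bound : ∀ b ≥ t₀, (∫ t in t₀..b, h t ^ 2) ≤ M + 2 * h t₀ := by
    intro b hb
    have h1 : (∫ t in t₀..b, h t ^ 2) = (∫ t in t₀..b, g t) - 2 * (h b - h t₀) := by
      rw [key b hb]; ring
    have h2 : (∫ t in t₀..b, g t) ≤ ∫ t in t₀..b, |g t| := by
      apply intervalIntegral.integral_mono_on hb (hint_g b hb) ((hint_g b hb).abs)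
      intro t _; exact le_abs_self _
    nlinarith [hpos b hb, hbound b hb]
  -- h² is integrable on Ioi t₀
  have hsq_int : IntegrableOn (fun t => h t ^ 2) (Ioi t₀) volume := by
    apply integrableOn_Ioi_of_intervalIntegral_norm_bounded (M + 2 * h t₀) t₀
      (b := fun n : ℕ => t₀ + n) (l := atTop)
    · intro i
      exact (hint_sq (t₀ + i) (le_add_of_nonneg_right (Nat.cast_nonneg i))).1
    · exact tendsto_atTop_add_const_left _ _ tendsto_natCast_atTop_atTop
    · filter_upwards with n
      have : ∀ t, ‖h t ^ 2‖ = h t ^ 2 := fun t => by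
        rw [Real.norm_eq_abs, abs_of_nonneg (sq_nonneg _)]
      simp only [this]
      exact hsq_bound _ (le_add_of_nonneg_right (Nat.cast_nonneg n))
  have hg_int : IntegrableOn g (Ioi t₀) volume := hint.mono_set Ioi_subset_Ici_self
  -- convergence of the integrals
  have tG : Tendsto (fun b => ∫ t in t₀..b, g t) atTop (nhds (∫ t in Ioi t₀, g t)) :=
    intervalIntegral_tendsto_integral_Ioi t₀ hg_int tendsto_id
  have tI : Tendsto (fun b => ∫ t in t₀..b, h t ^ 2) atTop
      (nhds (∫ t in Ioi t₀, h t ^ 2)) :=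
    intervalIntegral_tendsto_integral_Ioi t₀ hsq_int tendsto_id
  set L : ℝ := h t₀ + ((∫ t in Ioi t₀, g t) - ∫ t in Ioi t₀, h t ^ 2) / 2
  have tL : Tendsto h atTop (nhds L) := by
    have : Tendsto (fun b => h t₀ + ((∫ t in t₀..b, g t) - ∫ t in t₀..b, h t ^ 2) / 2)
        atTop (nhds L) := tendsto_const_nhds.add ((tG.sub tI).div_const 2)
    apply this.congr'
    filter_upwards [eventually_ge_atTop t₀] with b hb
    show h t₀ + ((∫ t in t₀..b, g t) - ∫ t in t₀..b, h t ^ 2) / 2 = h b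
    linarith [key b hb]
  -- L ≥ 0
  have hL0 : 0 ≤ L := by
    apply ge_of_tendsto tL
    filter_upwards [eventually_ge_atTop t₀] with b hb
    exact (hpos b hb).le
  -- L = 0
  have hLeq : L = 0 := by
    by_contra hne
    have hLpos : 0 < L := lt_of_le_of_ne hL0 (Ne.symm hne)
    have tsq : Tendsto (fun t => h t ^ 2) atTop (nhds (L ^ 2)) := tL.pow 2
    have hev : ∀ᶠ t in atTop, L ^ 2 / 2 ≤ h t ^ 2 := by
      have : ∀ᶠ t in atTop, h t ^ 2 ∈ Ioi (L ^ 2 / 2) :=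
        tsq (Ioi_mem_nhds (half_lt_self (by positivity)))
      filter_upwards [this] with t ht using ht.le
    obtain ⟨T, hT⟩ := (hev.and (eventually_ge_atTop t₀)).exists_forall_of_atTop
    have hconst : IntegrableOn (fun _ : ℝ => L ^ 2 / 2) (Ioi (max T t₀)) volume := by
      apply Integrable.mono (hsq_int.mono_set (Ioi_subset_Ioi (le_max_right T t₀)))
        aestronglyMeasurable_const
      filter_upwards [ae_restrict_mem measurableSet_Ioi] with t ht
      have h1 := (hT t (le_trans (le_max_left T t₀) ht.le)).1
      rw [Real.norm_eq_abs, Real.norm_eq_abs, abs_of_nonneg (by positivity : (0:ℝ) ≤ L ^ 2 / 2),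
        abs_of_nonneg (sq_nonneg _)]
      exact h1
    rw [integrableOn_const_iff] at hconst
    rcases hconst with hc | hc
    · exact (by positivity : (0:ℝ) < L ^ 2 / 2).ne' (enorm_eq_zero.mp hc)
    · simp [Real.volume_Ioi] at hc
  rw [hLeq] at tL
  exact tL
end

section
/- Let h ∈ C¹[t₀,∞) with h(t) > 0, and suppose ∫_{t₀}^{∞}|2h'(t)+h(t)²|dt < ∞. Let (x(t),y(t)) be a nontrivial solution of x' = y, y' = -x - h(t)y and set r(t) = √(x(t)² + y(t)²), H(t) = ∫_{t₀}^{t} h(s) ds. Then there exist a constant C > 0 and a continuous function δ on [t₀,∞) with lim_{t→∞} δ(t) = 0 such that r(t)² = e^{-H(t)} (C + δ(t)) for all t ≥ t₀. -/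
open Set Filter Real MeasureTheory

theorem stmt_14 (t₀ : ℝ) (h h' : ℝ → ℝ)
    (hderiv : ∀ t ≥ t₀, HasDerivAt h (h' t) t)
    (hh' : ContinuousOn h' (Ici t₀))
    (hpos : ∀ t ≥ t₀, 0 < h t)
    (hint : IntegrableOn (fun t => 2 * h' t + (h t) ^ 2) (Ici t₀) volume)
    (x y : ℝ → ℝ)
    (hx : ∀ t ≥ t₀, HasDerivAt x (y t) t)
    (hy : ∀ t ≥ t₀, HasDerivAt y (-x t - h t * y t) t)
    (hnontriv : ∀ t ≥ t₀, (x t, y t) ≠ (0, 0)) :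
    ∃ C > 0, ∃ δ : ℝ → ℝ, ContinuousOn δ (Ici t₀) ∧ Tendsto δ atTop (nhds 0) ∧
      ∀ t ≥ t₀, Real.sqrt ((x t) ^ 2 + (y t) ^ 2) ^ 2 =
        Real.exp (-(∫ s in t₀..t, h s)) * (C + δ t) := by
  -- basic continuity
  have hch : ContinuousOn h (Ici t₀) := fun t ht => (hderiv t ht).continuousAt.continuousWithinAt
  have hcx : ContinuousOn x (Ici t₀) := fun t ht => (hx t ht).continuousAt.continuousWithinAt
  have hcy : ContinuousOn y (Ici t₀) := fun t ht => (hy t ht).continuousAt.continuousWithinAt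
  set g : ℝ → ℝ := fun t => 2 * h' t + h t ^ 2 with hgdef
  have hcg : ContinuousOn g (Ici t₀) := by
    have : ContinuousOn (fun t => 2 * h' t) (Ici t₀) := continuousOn_const.mul hh'
    exact this.add (hch.pow 2)
  -- interval integrability helper
  have hsub : ∀ {a b : ℝ}, t₀ ≤ a → t₀ ≤ b → uIcc a b ⊆ Ici t₀ := by
    intro a b ha hb s hs
    exact le_trans (le_min ha hb) hs.1
  have hii : ∀ (f : ℝ → ℝ), ContinuousOn f (Ici t₀) → ∀ {a b : ℝ}, t₀ ≤ a → t₀ ≤ b →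
      IntervalIntegrable f volume a b := by
    intro f hf a b ha hb
    exact (hf.mono (hsub ha hb)).intervalIntegrable
  -- FTC for h
  have hFTC : ∀ T ≥ t₀, h T - h t₀ = ∫ s in t₀..T, h' s := by
    intro T hT
    rw [intervalIntegral.integral_eq_sub_of_hasDerivAt
      (fun s hs => hderiv s (hsub le_rfl hT hs)) (hii h' hh' le_rfl hT)]
  -- relation between integrals
  have hsplit : ∀ T ≥ t₀, (∫ s in t₀..T, h s ^ 2) = (∫ s in t₀..T, g s) - 2 * (h T - h t₀) := by
    intro T hT
    have h1 : (∫ s in t₀..T, g s) = 2 * (∫ s in t₀..T, h' s) + ∫ s in t₀..T, h s ^ 2 := by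
      rw [← intervalIntegral.integral_const_mul, ← intervalIntegral.integral_add
        ((hii h' hh' le_rfl hT).const_mul 2) (hii (fun s => h s ^ 2) (hch.pow 2) le_rfl hT)]
    rw [h1, hFTC T hT]; ring
  -- |g| is integrable on Ioi t₀
  have habs0 : IntegrableOn (fun t => |g t|) (Ici t₀) volume := hint.abs
  have habs : IntegrableOn (fun t => |g t|) (Ioi t₀) volume :=
    habs0.mono_set Ioi_subset_Ici_self
  set I : ℝ := (∫ s in Ioi t₀, |g s|) + 2 * h t₀ with hIdef
  -- integrability of h^2 on Ioi t₀
  have hIocInt : ∀ (f : ℝ → ℝ), ContinuousOn f (Ici t₀) → ∀ T : ℝ,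
      IntegrableOn f (Ioc t₀ T) volume := by
    intro f hf T
    rcases le_or_gt T t₀ with hT | hT
    · rw [Ioc_eq_empty (by exact not_lt.2 hT)]; exact integrableOn_empty
    · exact ((hf.mono (Icc_subset_Ici_self)).integrableOn_Icc).mono_set Ioc_subset_Icc_self
  have hbound : ∀ T ≥ t₀, (∫ s in t₀..T, h s ^ 2) ≤ I := by
    intro T hT
    have h2 : (∫ s in t₀..T, g s) ≤ ∫ s in Ioi t₀, |g s| := by
      rw [intervalIntegral.integral_of_le hT]
      calc (∫ s in Ioc t₀ T, g s) ≤ ∫ s in Ioc t₀ T, |g s| :=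
            setIntegral_mono_on (hIocInt g hcg T) ((hIocInt g hcg T).abs)
              measurableSet_Ioc (fun s _ => le_abs_self _)
        _ ≤ ∫ s in Ioi t₀, |g s| := by
            apply setIntegral_mono_set habs
            · filter_upwards with s using abs_nonneg _
            · exact HasSubset.Subset.eventuallyLE Ioc_subset_Ioi_self
    have h3 := hpos T hT
    rw [hsplit T hT]
    linarith
  have hsqInt : IntegrableOn (fun t => h t ^ 2) (Ioi t₀) volume := by
    apply MeasureTheory.integrableOn_Ioi_of_intervalIntegral_norm_bounded I t₀
      (hIocInt (fun s => h s ^ 2) (hch.pow 2)) tendsto_id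
    filter_upwards [eventually_ge_atTop t₀] with T hT
    have : (∫ s in t₀..T, ‖h s ^ 2‖) = ∫ s in t₀..T, h s ^ 2 := by
      apply intervalIntegral.integral_congr
      intro s hs
      exact norm_of_nonneg (sq_nonneg _)
    rw [this]; exact hbound T hT
  -- h tends to a limit L
  set L : ℝ := h t₀ + ((∫ s in Ioi t₀, g s) - ∫ s in Ioi t₀, h s ^ 2) / 2 with hLdef
  have hgInt : IntegrableOn g (Ioi t₀) volume := hint.mono_set Ioi_subset_Ici_self
  have hhL : Tendsto h atTop (nhds L) := by
    have hG := MeasureTheory.intervalIntegral_tendsto_integral_Ioi t₀ hgInt tendsto_id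
    have hS := MeasureTheory.intervalIntegral_tendsto_integral_Ioi t₀ hsqInt tendsto_id
    have := (tendsto_const_nhds (x := h t₀)).add ((hG.sub hS).div_const 2)
    apply this.congr'
    filter_upwards [eventually_ge_atTop t₀] with T hT
    have := hsplit T hT
    simp only [id_eq]
    linarith
  -- L = 0
  have hL0 : L = 0 := by
    by_contra hne
    have hLnn : 0 ≤ L := ge_of_tendsto hhL
      ((eventually_ge_atTop t₀).mono fun T hT => (hpos T hT).le)
    have hLpos : 0 < L := lt_of_le_of_ne hLnn (Ne.symm hne)
    -- eventually h ≥ L/2, contradicting integrability of h^2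
    have hev : ∀ᶠ T in atTop, L / 2 < h T := hhL.eventually_const_lt (half_lt_self hLpos)
    obtain ⟨T₂, hT₂⟩ := (hev.and (eventually_gt_atTop t₀)).exists_forall_of_atTop
    have hconst : Integrable (fun _ : ℝ => (L / 2) ^ 2) (volume.restrict (Ici T₂)) := by
      apply Integrable.mono' (hsqInt.mono_set (Ici_subset_Ioi.2 (hT₂ T₂ le_rfl).2))
        aestronglyMeasurable_const
      filter_upwards [ae_restrict_mem measurableSet_Ici] with s hs
      have h1 := (hT₂ s hs).1
      have h2 : 0 < L / 2 := half_pos hLpos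
      rw [Real.norm_eq_abs, abs_of_nonneg (sq_nonneg _)]
      exact pow_le_pow_left₀ h2.le h1.le 2
    rw [integrable_const_iff] at hconst
    rcases hconst with hc | hc
    · exact (pow_pos (half_pos hLpos) 2).ne' hc
    · have hc' := hc.measure_univ_lt_top
      rw [Measure.restrict_apply_univ] at hc'
      simp [volume_Ici] at hc'
  have hh0 : Tendsto h atTop (nhds 0) := hL0 ▸ hhL
  -- choose T₁ > t₀ with h ≤ 1 on [T₁, ∞)
  obtain ⟨T₁, hT₁⟩ := ((hh0.eventually_lt_const (by norm_num : (0:ℝ) < 1)).and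
    (eventually_gt_atTop t₀)).exists_forall_of_atTop
  have hT₁gt : t₀ < T₁ := (hT₁ T₁ le_rfl).2
  have hT₁le : ∀ t ≥ T₁, h t ≤ 1 := fun t ht => (hT₁ t ht).1.le
  -- the primitive H of h
  set H : ℝ → ℝ := fun t => ∫ s in t₀..t, h s with hHdef
  have hHd : ∀ t, t₀ < t → HasDerivAt H (h t) t := by
    intro t ht
    apply intervalIntegral.integral_hasDerivAt_right (hii h hch le_rfl ht.le)
    · exact ⟨Ioi t₀, Ioi_mem_nhds ht,
        ((hch.mono Ioi_subset_Ici_self).aestronglyMeasurable measurableSet_Ioi)⟩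
    · exact (hderiv t ht.le).continuousAt
  have hHc : ContinuousOn H (Ici t₀) := by
    intro t ht
    have hInt : IntegrableOn h (uIcc t₀ (t + 1)) volume := by
      have : uIcc t₀ (t + 1) ⊆ Ici t₀ := hsub le_rfl (by linarith [mem_Ici.mp ht])
      exact ((hch.mono this).integrableOn_compact isCompact_uIcc)
    have hc1 := intervalIntegral.continuousOn_primitive_interval hInt
    have huIcc : uIcc t₀ (t + 1) = Icc t₀ (t + 1) :=
      uIcc_of_le (by linarith [mem_Ici.mp ht])
    have ht1 : t ∈ Icc t₀ (t + 1) := ⟨ht, by linarith⟩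
    have hw : ContinuousWithinAt H (Icc t₀ (t + 1)) t := by
      rw [huIcc] at hc1; exact hc1 t ht1
    apply hw.mono_of_mem_nhdsWithin
    have : Icc t₀ (t + 1) = Ici t₀ ∩ Iic (t + 1) := (Ici_inter_Iic).symm
    rw [this]
    exact inter_mem_nhdsWithin _ (Iic_mem_nhds (by linarith))
  -- the key quantity ρ and its derivative
  set q : ℝ → ℝ := fun t => x t ^ 2 + y t ^ 2 + h t * (x t * y t) with hqdef
  set ρ : ℝ → ℝ := fun t => Real.exp (H t) * q t with hρdef
  set ρ' : ℝ → ℝ := fun t => Real.exp (H t) * (h' t * (x t * y t)) with hρ'def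
  have hρd : ∀ t, t₀ < t → HasDerivAt ρ (ρ' t) t := by
    intro t ht
    have hE : HasDerivAt (fun s => Real.exp (H s)) (Real.exp (H t) * h t) t :=
      (hHd t ht).exp
    have hxt := hx t ht.le
    have hyt := hy t ht.le
    have hht := hderiv t ht.le
    have hq := ((hxt.pow 2).add (hyt.pow 2)).add (hht.mul (hxt.mul hyt))
    have hD : HasDerivAt (fun s => Real.exp (H s) * q s) _ t := hE.mul hq
    convert hD using 1
    simp only [hρ'def, hqdef, Pi.add_apply, Pi.mul_apply, Pi.pow_apply]
    push_cast
    ring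
  -- positivity facts
  have hr2 : ∀ t ≥ t₀, 0 < x t ^ 2 + y t ^ 2 := by
    intro t ht
    have hnt := hnontriv t ht
    rcases eq_or_ne (x t) 0 with hx0 | hx0
    · rcases eq_or_ne (y t) 0 with hy0 | hy0
      · exact absurd (by rw [hx0, hy0]) hnt
      · positivity
    · positivity
  have habxy : ∀ t : ℝ, |x t * y t| ≤ (x t ^ 2 + y t ^ 2) / 2 := by
    intro t
    rw [abs_mul]
    nlinarith [sq_nonneg (|x t| - |y t|), sq_abs (x t), sq_abs (y t),
      abs_nonneg (x t), abs_nonneg (y t)]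
  have hqlow : ∀ t ≥ T₁, (x t ^ 2 + y t ^ 2) / 2 ≤ q t := by
    intro t ht
    have h1 := hpos t (le_trans hT₁gt.le ht)
    have h2 := hT₁le t ht
    simp only [hqdef]
    nlinarith [mul_nonneg h1.le (sq_nonneg (x t + y t)),
      mul_nonneg (sub_nonneg.2 h2) (add_nonneg (sq_nonneg (x t)) (sq_nonneg (y t)))]
  have hρpos : ∀ t ≥ T₁, 0 < ρ t := by
    intro t ht
    have h1 := hqlow t ht
    have hr := hr2 t (le_trans hT₁gt.le ht)
    have h2 : 0 < q t := lt_of_lt_of_le (by linarith) h1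
    exact mul_pos (Real.exp_pos _) h2
  have hqup : ∀ t ≥ T₁, Real.exp (H t) * (x t ^ 2 + y t ^ 2) ≤ 2 * ρ t := by
    intro t ht
    have h1 := hqlow t ht
    have hE := (Real.exp_pos (H t)).le
    have h2 := mul_le_mul_of_nonneg_left h1 hE
    calc Real.exp (H t) * (x t ^ 2 + y t ^ 2)
        = 2 * (Real.exp (H t) * ((x t ^ 2 + y t ^ 2) / 2)) := by ring
      _ ≤ 2 * (Real.exp (H t) * q t) :=
          mul_le_mul_of_nonneg_left h2 (by norm_num)
      _ = 2 * ρ t := rfl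
  have hh'eq : ∀ t : ℝ, h' t = (g t - h t ^ 2) / 2 := by
    intro t; simp only [hgdef]; ring
  set k : ℝ → ℝ := fun t => (|g t| + h t ^ 2) / 2 with hkdef
  have hIciT₁ : Ici T₁ ⊆ Ici t₀ := Ici_subset_Ici.2 hT₁gt.le
  have hkInt : IntegrableOn k (Ici T₁) volume := by
    have h0 : IntegrableOn (fun t => |g t| + h t ^ 2) (Ioi t₀) volume := habs.add hsqInt
    have h1 : IntegrableOn (fun t => |g t| + h t ^ 2) (Ici T₁) volume :=
      h0.mono_set (Ici_subset_Ioi.2 hT₁gt)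
    exact h1.div_const 2
  have hcρ' : ContinuousOn ρ' (Ici T₁) :=
    (Real.continuous_exp.comp_continuousOn (hHc.mono hIciT₁)).mul
      ((hh'.mono hIciT₁).mul ((hcx.mono hIciT₁).mul (hcy.mono hIciT₁)))
  have hcρ : ContinuousOn ρ (Ici T₁) :=
    (Real.continuous_exp.comp_continuousOn (hHc.mono hIciT₁)).mul
      ((((hcx.mono hIciT₁).pow 2).add ((hcy.mono hIciT₁).pow 2)).add
        ((hch.mono hIciT₁).mul ((hcx.mono hIciT₁).mul (hcy.mono hIciT₁))))
  set φ : ℝ → ℝ := fun t => ρ' t / ρ t with hφdef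
  have hcφ : ContinuousOn φ (Ici T₁) :=
    hcρ'.div hcρ (fun t ht => (hρpos t ht).ne')
  have hφb : ∀ t ∈ Ici T₁, ‖φ t‖ ≤ k t := by
    intro t ht
    have hb1 : |h' t| ≤ (|g t| + h t ^ 2) / 2 := by
      rw [hh'eq t, abs_div]
      have h1 : |g t - h t ^ 2| ≤ |g t| + h t ^ 2 := by
        calc |g t - h t ^ 2| ≤ |g t| + |h t ^ 2| := abs_sub _ _
          _ = |g t| + h t ^ 2 := by rw [abs_of_nonneg (sq_nonneg (h t))]
      have h2 : |(2 : ℝ)| = 2 := by norm_num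
      rw [h2]
      linarith [h1]
    have hb2 := habxy t
    have hb3 := hqup t ht
    rw [Real.norm_eq_abs]
    have hρt := hρpos t ht
    rw [show φ t = ρ' t / ρ t from rfl, abs_div, abs_of_pos hρt, div_le_iff₀ hρt]
    have habs' : |ρ' t| = Real.exp (H t) * (|h' t| * |x t * y t|) := by
      rw [show ρ' t = Real.exp (H t) * (h' t * (x t * y t)) from rfl, abs_mul, abs_mul,
        Real.abs_exp]
    rw [habs']
    calc Real.exp (H t) * (|h' t| * |x t * y t|)
        ≤ Real.exp (H t) * (((|g t| + h t ^ 2) / 2) * ((x t ^ 2 + y t ^ 2) / 2)) := by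
          apply mul_le_mul_of_nonneg_left _ (Real.exp_pos _).le
          exact mul_le_mul hb1 hb2 (abs_nonneg _) (by positivity)
      _ = ((|g t| + h t ^ 2) / 4) * (Real.exp (H t) * (x t ^ 2 + y t ^ 2)) := by ring
      _ ≤ ((|g t| + h t ^ 2) / 4) * (2 * ρ t) := by
          apply mul_le_mul_of_nonneg_left hb3 (by positivity)
      _ = k t * ρ t := by rw [show k t = (|g t| + h t ^ 2) / 2 from rfl]; ring
  have hφInt : IntegrableOn φ (Ici T₁) volume := by
    apply Integrable.mono' hkInt (hcφ.aestronglyMeasurable measurableSet_Ici)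
    filter_upwards [ae_restrict_mem measurableSet_Ici] with t ht
    exact hφb t ht
  -- FTC for log ρ
  have hlog : ∀ t ≥ T₁, Real.log (ρ t) - Real.log (ρ T₁) = ∫ s in T₁..t, φ s := by
    intro t ht
    rw [intervalIntegral.integral_eq_sub_of_hasDerivAt (f := fun s => Real.log (ρ s))
      (f' := φ) ?_ ?_]
    · intro s hs
      rw [uIcc_of_le ht] at hs
      exact (hρd s (lt_of_lt_of_le hT₁gt hs.1)).log (hρpos s hs.1).ne'
    · apply (hcφ.mono ?_).intervalIntegrable
      rw [uIcc_of_le ht]; exact Icc_subset_Ici_self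
  have hJ : Tendsto (fun t => ∫ s in T₁..t, φ s) atTop (nhds (∫ s in Ioi T₁, φ s)) :=
    MeasureTheory.intervalIntegral_tendsto_integral_Ioi T₁
      (hφInt.mono_set Ioi_subset_Ici_self) tendsto_id
  set Cρ : ℝ := Real.exp (Real.log (ρ T₁) + ∫ s in Ioi T₁, φ s) with hCρdef
  have hρlim : Tendsto ρ atTop (nhds Cρ) := by
    have h1 : Tendsto (fun t => Real.log (ρ T₁) + ∫ s in T₁..t, φ s) atTop
        (nhds (Real.log (ρ T₁) + ∫ s in Ioi T₁, φ s)) := tendsto_const_nhds.add hJ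
    have h2 := (Real.continuous_exp.tendsto _).comp h1
    apply h2.congr'
    filter_upwards [eventually_ge_atTop T₁] with t ht
    show Real.exp (Real.log (ρ T₁) + ∫ s in T₁..t, φ s) = ρ t
    rw [← hlog t ht,
      show Real.log (ρ T₁) + (Real.log (ρ t) - Real.log (ρ T₁)) = Real.log (ρ t) by ring]
    exact Real.exp_log (hρpos t ht)
  have hCρpos : 0 < Cρ := Real.exp_pos _
  -- the correction term tends to 0
  have hz : Tendsto (fun t => Real.exp (H t) * (h t * (x t * y t))) atTop (nhds 0) := by
    apply squeeze_zero_norm' (a := fun t => h t * ρ t)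
    · filter_upwards [eventually_ge_atTop T₁] with t ht
      have ht₀ : t₀ ≤ t := le_trans hT₁gt.le ht
      have hpt := hpos t ht₀
      have hb2 := habxy t
      have hb3 := hqup t ht
      have hE := (Real.exp_pos (H t)).le
      calc ‖Real.exp (H t) * (h t * (x t * y t))‖
          = Real.exp (H t) * (h t * |x t * y t|) := by
            rw [Real.norm_eq_abs, abs_mul, abs_mul, Real.abs_exp, abs_of_pos hpt]
        _ ≤ Real.exp (H t) * (h t * ((x t ^ 2 + y t ^ 2) / 2)) := by
            apply mul_le_mul_of_nonneg_left _ hE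
            exact mul_le_mul_of_nonneg_left hb2 hpt.le
        _ = (h t / 2) * (Real.exp (H t) * (x t ^ 2 + y t ^ 2)) := by ring
        _ ≤ (h t / 2) * (2 * ρ t) := by
            apply mul_le_mul_of_nonneg_left hb3 (by positivity)
        _ = h t * ρ t := by ring
    · simpa using hh0.mul hρlim
  set u : ℝ → ℝ := fun t => Real.exp (H t) * (x t ^ 2 + y t ^ 2) with hudef
  have hulim : Tendsto u atTop (nhds Cρ) := by
    have h1 := hρlim.sub hz
    rw [sub_zero] at h1
    apply h1.congr
    intro t
    simp only [hudef, hρdef, hqdef]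
    ring
  refine ⟨Cρ, hCρpos, fun t => u t - Cρ, ?_, ?_, ?_⟩
  · exact ((Real.continuous_exp.comp_continuousOn hHc).mul
      ((hcx.pow 2).add (hcy.pow 2))).sub continuousOn_const
  · simpa using hulim.sub (tendsto_const_nhds (x := Cρ))
  · intro t ht
    rw [Real.sq_sqrt (by positivity)]
    rw [show Cρ + (u t - Cρ) = u t by ring]
    rw [show (∫ s in t₀..t, h s) = H t from rfl]
    rw [show u t = Real.exp (H t) * (x t ^ 2 + y t ^ 2) from rfl]
    rw [Real.exp_neg, inv_mul_cancel_left₀ (Real.exp_ne_zero _)]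
end

section
/- Let h ∈ C¹[t₀,∞) with h(t) > 0, ∫_{t₀}^{∞}|2h'(t)+h(t)²|dt < ∞, and H(t) = ∫_{t₀}^{t} h(s)ds = 2α log t + O(1) as t → ∞ for some α ∈ (0,1). Let (x(t),y(t)) be a nontrivial solution of x' = y, y' = -x - h(t)y, and r(t) = √(x(t)²+y(t)²). Then 0 < liminf_{t→∞} t^α r(t) ≤ limsup_{t→∞} t^α r(t) < ∞. -/
open Set Filter Real MeasureTheory

lemma stmt_15_aux1 (a b : ℝ) : |a * b| ≤ (a * a + b * b) / 2 := by
  rw [abs_le]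
  constructor
  · nlinarith [sq_nonneg (a + b)]
  · nlinarith [sq_nonneg (a - b)]

lemma stmt_15_aux2 (x y hh B : ℝ) (h4 : hh ^ 2 * x ^ 2 ≤ B ^ 2 * x ^ 2) :
    x * x + (y + hh * x / 2) * (y + hh * x / 2) ≤ (2 + B ^ 2 / 2) * (x ^ 2 + y ^ 2) := by
  nlinarith [sq_nonneg (y - hh * x / 2), sq_nonneg x, sq_nonneg y]

lemma stmt_15_aux3 (x y hh B : ℝ) (h4 : hh ^ 2 * x ^ 2 ≤ B ^ 2 * x ^ 2) :
    x ^ 2 + y ^ 2 ≤ (2 + B ^ 2 / 2) * (x * x + (y + hh * x / 2) * (y + hh * x / 2)) := by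
  nlinarith [sq_nonneg (y + hh * x), sq_nonneg x, sq_nonneg y]

set_option maxHeartbeats 1000000 in
theorem stmt_15 (t₀ : ℝ) (h h' : ℝ → ℝ)
    (hderiv : ∀ t ≥ t₀, HasDerivAt h (h' t) t)
    (hh' : ContinuousOn h' (Ici t₀))
    (hpos : ∀ t ≥ t₀, 0 < h t)
    (hint : IntegrableOn (fun t => 2 * h' t + (h t) ^ 2) (Ici t₀) volume)
    (α : ℝ) (hα : α ∈ Ioo (0:ℝ) 1)
    (hH : ∃ M > 0, ∃ t₁ ≥ t₀, ∀ t ≥ t₁,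
      |(∫ s in t₀..t, h s) - 2 * α * Real.log t| ≤ M)
    (x y : ℝ → ℝ)
    (hx : ∀ t ≥ t₀, HasDerivAt x (y t) t)
    (hy : ∀ t ≥ t₀, HasDerivAt y (-x t - h t * y t) t)
    (hnontriv : ∀ t ≥ t₀, (x t, y t) ≠ (0, 0)) :
    0 < atTop.liminf (fun t : ℝ =>
        ENNReal.ofReal (t ^ α * Real.sqrt ((x t) ^ 2 + (y t) ^ 2))) ∧
      atTop.limsup (fun t : ℝ =>
        ENNReal.ofReal (t ^ α * Real.sqrt ((x t) ^ 2 + (y t) ^ 2))) < ⊤ := by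
  obtain ⟨M, hMpos, t₁, ht₁t₀, hHb⟩ := hH
  set g : ℝ → ℝ := fun s => 2 * h' s + h s ^ 2 with hgdef
  have hgint : IntegrableOn g (Ici t₀) volume := hint
  have hgabs : IntegrableOn (fun s => |g s|) (Ici t₀) volume := hgint.abs
  set G : ℝ := ∫ s in Ici t₀, |g s| with hGdef
  have hG0 : 0 ≤ G := setIntegral_nonneg measurableSet_Ici (fun s _ => abs_nonneg _)
  have hsub : ∀ a b : ℝ, t₀ ≤ a → Ioc a b ⊆ Ici t₀ := fun a b ha s hs => le_trans ha hs.1.le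
  have hgII : ∀ a b : ℝ, t₀ ≤ a → a ≤ b → IntervalIntegrable (fun s => |g s|) volume a b := by
    intro a b ha hab
    rw [intervalIntegrable_iff_integrableOn_Ioc_of_le hab]
    exact hgabs.mono_set (hsub a b ha)
  have hgbound : ∀ a b : ℝ, t₀ ≤ a → a ≤ b → (∫ s in a..b, |g s|) ≤ G := by
    intro a b ha hab
    rw [intervalIntegral.integral_of_le hab]
    exact setIntegral_mono_set hgabs (Filter.Eventually.of_forall fun s => abs_nonneg _)
      ((hsub a b ha).eventuallyLE)
  -- h is bounded by B
  set B : ℝ := h t₀ + G / 2 with hBdef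
  have hBpos : 0 < B := by have := hpos t₀ le_rfl; simp only [hBdef]; linarith
  have hhB : ∀ t ≥ t₀, h t ≤ B := by
    intro t ht
    have h'II : IntervalIntegrable h' volume t₀ t := by
      apply ContinuousOn.intervalIntegrable
      apply hh'.mono
      rw [uIcc_of_le ht]
      exact fun s hs => hs.1
    have hftc : (∫ s in t₀..t, h' s) = h t - h t₀ :=
      intervalIntegral.integral_eq_sub_of_hasDerivAt
        (fun s hs => hderiv s (by rw [uIcc_of_le ht] at hs; exact hs.1)) h'II
    have hmono : (∫ s in t₀..t, h' s) ≤ ∫ s in t₀..t, |g s| / 2 := by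
      apply intervalIntegral.integral_mono_on ht h'II ((hgII t₀ t le_rfl ht).div_const 2)
      intro s _
      have h1 : 2 * h' s + h s ^ 2 ≤ |g s| := le_abs_self _
      nlinarith [sq_nonneg (h s)]
    have hdiv : (∫ s in t₀..t, |g s| / 2) = (∫ s in t₀..t, |g s|) / 2 := by
      rw [intervalIntegral.integral_div]
    have h2 : (∫ s in t₀..t, |g s|) ≤ G := hgbound t₀ t le_rfl ht
    simp only [hBdef]
    linarith [hftc, hmono, hdiv]
  -- main auxiliary functions
  set w : ℝ → ℝ := fun t => y t + h t * x t / 2 with hwdef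
  set Ew : ℝ → ℝ := fun t => x t * x t + w t * w t with hEwdef
  have hEwpos : ∀ t ≥ t₀, 0 < Ew t := by
    intro t ht
    have hne : x t = 0 → w t = 0 → False := by
      intro h1 h2
      apply hnontriv t ht
      have hy0 : y t = 0 := by
        simp only [hwdef, h1] at h2; linarith
      simp [h1, hy0]
    simp only [hEwdef]
    rcases eq_or_ne (x t) 0 with h1 | h1
    · rcases eq_or_ne (w t) 0 with h2 | h2
      · exact (hne h1 h2).elim
      · nlinarith [mul_self_pos.2 h2, mul_self_nonneg (x t)]
    · nlinarith [mul_self_pos.2 h1, mul_self_nonneg (w t)]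
  set W' : ℝ → ℝ := fun t => (-x t - h t * y t) + (h' t * x t + h t * y t) / 2 with hW'def
  have hwderiv : ∀ t ≥ t₀, HasDerivAt w (W' t) t := by
    intro t ht
    exact (hy t ht).add (((hderiv t ht).mul (hx t ht)).div_const 2)
  set Ew' : ℝ → ℝ := fun t => y t * x t + x t * y t + (W' t * w t + w t * W' t) with hEw'def
  have hEwderiv : ∀ t ≥ t₀, HasDerivAt Ew (Ew' t) t := by
    intro t ht
    exact ((hx t ht).mul (hx t ht)).add ((hwderiv t ht).mul (hwderiv t ht))
  have hkey : ∀ t : ℝ, Ew' t = -(h t) * Ew t + g t / 2 * (x t * w t) := by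
    intro t
    simp only [hEw'def, hW'def, hEwdef, hwdef, hgdef]
    ring
  set H : ℝ → ℝ := fun t => ∫ s in t₀..t, h s with hHdef
  have hhcont : ContinuousOn h (Ioi t₀) :=
    fun s hs => ((hderiv s (le_of_lt hs)).continuousAt).continuousWithinAt
  have hHderiv : ∀ t > t₀, HasDerivAt H (h t) t := by
    intro t ht
    apply intervalIntegral.integral_hasDerivAt_right
    · apply ContinuousOn.intervalIntegrable
      intro s hs
      rw [uIcc_of_le (le_of_lt ht)] at hs
      exact ((hderiv s hs.1).continuousAt).continuousWithinAt
    · exact ContinuousOn.stronglyMeasurableAtFilter isOpen_Ioi hhcont t ht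
    · exact (hderiv t ht.le).continuousAt
  set ψ : ℝ → ℝ := fun t => H t + Real.log (Ew t) with hψdef
  set φ : ℝ → ℝ := fun t => g t / 2 * (x t * w t) / Ew t with hφdef
  have hψderiv : ∀ t > t₀, HasDerivAt ψ (φ t) t := by
    intro t ht
    have h1 : HasDerivAt ψ (h t + Ew' t / Ew t) t :=
      (hHderiv t ht).add ((hEwderiv t ht.le).log (ne_of_gt (hEwpos t ht.le)))
    convert h1 using 1
    have h2 := hEwpos t ht.le
    rw [hkey t]
    simp only [hφdef]
    field_simp
    ring
  -- choose starting point
  set t₂ : ℝ := max t₁ (max (t₀ + 1) 1) with ht₂def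
  have ht₂t₀ : t₀ < t₂ := lt_of_lt_of_le (by linarith) ((le_max_left _ _).trans (le_max_right _ _))
  have ht₂1 : (1:ℝ) ≤ t₂ := (le_max_right _ _).trans (le_max_right _ _)
  have ht₂t₁ : t₁ ≤ t₂ := le_max_left _ _
  -- Gronwall-type bound
  have main : ∀ t ≥ t₂, |ψ t - ψ t₂| ≤ G / 4 := by
    intro t ht
    have hφcont : ∀ s, t₀ < s → ContinuousAt φ s := by
      intro s hs
      have hsm : Ici t₀ ∈ nhds s := Ici_mem_nhds hs
      have cx : ContinuousAt x s := (hx s hs.le).continuousAt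
      have cy : ContinuousAt y s := (hy s hs.le).continuousAt
      have ch : ContinuousAt h s := (hderiv s hs.le).continuousAt
      have ch' : ContinuousAt h' s := hh'.continuousAt hsm
      have cw : ContinuousAt w s := by
        simp only [hwdef]; fun_prop
      have cE : ContinuousAt Ew s := by
        simp only [hEwdef]; fun_prop
      have cg : ContinuousAt g s := by
        simp only [hgdef]; fun_prop
      simp only [hφdef]
      exact ((cg.div_const 2).mul (cx.mul cw)).div cE (ne_of_gt (hEwpos s hs.le))
    have hφII : IntervalIntegrable φ volume t₂ t := by
      apply ContinuousOn.intervalIntegrable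
      rw [uIcc_of_le ht]
      intro s hs
      exact (hφcont s (lt_of_lt_of_le ht₂t₀ hs.1)).continuousWithinAt
    have hftc : (∫ s in t₂..t, φ s) = ψ t - ψ t₂ :=
      intervalIntegral.integral_eq_sub_of_hasDerivAt
        (fun s hs => hψderiv s (by rw [uIcc_of_le ht] at hs; exact lt_of_lt_of_le ht₂t₀ hs.1)) hφII
    have hptwise : ∀ s ∈ Icc t₂ t, |φ s| ≤ |g s| / 4 := by
      intro s hs
      have hs0 : t₀ ≤ s := le_trans ht₂t₀.le hs.1
      have hEp := hEwpos s hs0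
      have hEw_eq : Ew s = x s * x s + w s * w s := rfl
      have hxw : |x s * w s| ≤ Ew s / 2 := by
        rw [hEw_eq]
        exact stmt_15_aux1 _ _
      have e1 : |φ s| = |g s| / 2 * |x s * w s| / Ew s := by
        simp only [hφdef]
        rw [abs_div, abs_of_pos hEp, abs_mul, abs_div, abs_two]
      rw [e1, div_le_iff₀ hEp]
      nlinarith [mul_le_mul_of_nonneg_left hxw (abs_nonneg (g s)), abs_nonneg (g s), hEp.le]
    have habs : |∫ s in t₂..t, φ s| ≤ ∫ s in t₂..t, |φ s| :=
      intervalIntegral.abs_integral_le_integral_abs ht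
    have hmono2 : (∫ s in t₂..t, |φ s|) ≤ ∫ s in t₂..t, |g s| / 4 :=
      intervalIntegral.integral_mono_on ht hφII.abs ((hgII t₂ t ht₂t₀.le ht).div_const 4) hptwise
    have hdiv4 : (∫ s in t₂..t, |g s| / 4) = (∫ s in t₂..t, |g s|) / 4 := by
      rw [intervalIntegral.integral_div]
    have h2 : (∫ s in t₂..t, |g s|) ≤ G := hgbound t₂ t ht₂t₀.le ht
    rw [← hftc]
    linarith [habs, hmono2]
  -- convert to bounds on t ^ (2α) * Ew t
  set cA : ℝ := Real.exp (ψ t₂ - (G / 4 + M)) with hcAdef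
  set CA : ℝ := Real.exp (ψ t₂ + (G / 4 + M)) with hCAdef
  have hbound : ∀ t ≥ t₂, cA ≤ t ^ (2*α) * Ew t ∧ t ^ (2*α) * Ew t ≤ CA := by
    intro t ht
    have ht0 : (0:ℝ) < t := lt_of_lt_of_le one_pos (le_trans ht₂1 ht)
    have ht₀t : t₀ ≤ t := le_trans ht₂t₀.le ht
    have hE1 : t ^ (2*α) * Ew t = Real.exp (ψ t + (2*α*Real.log t - H t)) := by
      rw [Real.rpow_def_of_pos ht0, ← Real.exp_log (hEwpos t ht₀t), ← Real.exp_add]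
      congr 1
      simp only [hψdef]
      ring
    have hD : |2*α*Real.log t - H t| ≤ M := by
      rw [abs_sub_comm]
      exact hHb t (le_trans ht₂t₁ ht)
    have hm := main t ht
    rw [abs_le] at hD hm
    rw [hE1]
    constructor
    · simp only [hcAdef]
      apply Real.exp_le_exp.2
      linarith [hD.1, hm.1]
    · simp only [hCAdef]
      apply Real.exp_le_exp.2
      linarith [hD.2, hm.2]
  have hcApos : 0 < cA := Real.exp_pos _
  have hCApos : 0 < CA := Real.exp_pos _
  -- comparison between Ew and x² + y²
  set K : ℝ := 2 + B ^ 2 / 2 with hKdef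
  have hKpos : (0:ℝ) < K := by positivity
  have hcomp : ∀ t ≥ t₀, Ew t ≤ K * (x t ^ 2 + y t ^ 2) ∧ x t ^ 2 + y t ^ 2 ≤ K * Ew t := by
    intro t ht
    have h1 : 0 < h t := hpos t ht
    have h2 : h t ≤ B := hhB t ht
    have h3 : h t ^ 2 ≤ B ^ 2 := by nlinarith
    have h4 : h t ^ 2 * x t ^ 2 ≤ B ^ 2 * x t ^ 2 :=
      mul_le_mul_of_nonneg_right h3 (sq_nonneg _)
    constructor
    · simp only [hEwdef, hwdef, hKdef]
      exact stmt_15_aux2 _ _ _ _ h4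
    · simp only [hEwdef, hwdef, hKdef]
      exact stmt_15_aux3 _ _ _ _ h4
  -- final real bounds
  have hfinal : ∀ t ≥ t₂, Real.sqrt (cA / K) ≤ t ^ α * Real.sqrt (x t ^ 2 + y t ^ 2) ∧
      t ^ α * Real.sqrt (x t ^ 2 + y t ^ 2) ≤ Real.sqrt (K * CA) := by
    intro t ht
    have ht0 : (0:ℝ) < t := lt_of_lt_of_le one_pos (le_trans ht₂1 ht)
    have ht₀t : t₀ ≤ t := le_trans ht₂t₀.le ht
    obtain ⟨hb1, hb2⟩ := hbound t ht
    obtain ⟨hc1, hc2⟩ := hcomp t ht₀t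
    have hrpow0 : (0:ℝ) ≤ t ^ (2*α) := Real.rpow_nonneg ht0.le _
    have hlow : cA / K ≤ t ^ (2*α) * (x t ^ 2 + y t ^ 2) := by
      rw [div_le_iff₀ hKpos]
      calc cA ≤ t ^ (2*α) * Ew t := hb1
        _ ≤ t ^ (2*α) * (K * (x t ^ 2 + y t ^ 2)) :=
            mul_le_mul_of_nonneg_left hc1 hrpow0
        _ = t ^ (2*α) * (x t ^ 2 + y t ^ 2) * K := by ring
    have hup : t ^ (2*α) * (x t ^ 2 + y t ^ 2) ≤ K * CA := by
      calc t ^ (2*α) * (x t ^ 2 + y t ^ 2) ≤ t ^ (2*α) * (K * Ew t) :=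
            mul_le_mul_of_nonneg_left hc2 hrpow0
        _ = K * (t ^ (2*α) * Ew t) := by ring
        _ ≤ K * CA := mul_le_mul_of_nonneg_left hb2 hKpos.le
    have hsq : t ^ α * Real.sqrt (x t ^ 2 + y t ^ 2)
        = Real.sqrt (t ^ (2*α) * (x t ^ 2 + y t ^ 2)) := by
      rw [Real.sqrt_mul hrpow0]
      congr 1
      rw [Real.sqrt_eq_rpow, ← Real.rpow_mul ht0.le]
      congr 1
      ring
    rw [hsq]
    exact ⟨Real.sqrt_le_sqrt hlow, Real.sqrt_le_sqrt hup⟩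
  have hc₂pos : 0 < Real.sqrt (cA / K) := Real.sqrt_pos.2 (by positivity)
  have hev1 : ∀ᶠ t in atTop, ENNReal.ofReal (Real.sqrt (cA / K)) ≤
      ENNReal.ofReal (t ^ α * Real.sqrt (x t ^ 2 + y t ^ 2)) :=
    (eventually_ge_atTop t₂).mono fun t ht => ENNReal.ofReal_le_ofReal (hfinal t ht).1
  have hev2 : ∀ᶠ t in atTop, ENNReal.ofReal (t ^ α * Real.sqrt (x t ^ 2 + y t ^ 2)) ≤
      ENNReal.ofReal (Real.sqrt (K * CA)) :=
    (eventually_ge_atTop t₂).mono fun t ht => ENNReal.ofReal_le_ofReal (hfinal t ht).2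
  constructor
  · exact lt_of_lt_of_le (ENNReal.ofReal_pos.2 hc₂pos)
      (le_liminf_of_le (by isBoundedDefault) hev1)
  · exact lt_of_le_of_lt (limsup_le_of_le (by isBoundedDefault) hev2)
      ENNReal.ofReal_lt_top
end
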